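/- arXiv:2208.00743 — 8 statements merged into one kernel-verified Lean document; each statement's English description precedes it below -/
import Mathlib

section
/- For every integer n ≥ 3, the power graph P(G(n)) of the gyrogroup (G(n),⊕) is exactly the following graph Γ_n: two distinct vertices u, v ∈ {0,1,…,2^n−1} are adjacent if and only if both u < 2^{n-1} and v < 2^{n-1}, or u = 0, or v = 0. Equivalently, the induced subgraph of P(G(n)) on {0,1,…,2^{n-1}−1} is the complete graph K_{2^{n-1}} and every vertex of {2^{n-1},…,2^n−1} is adjacent only to the identity 0. -/
/-- The gyrogroup operation ⊕ on G(n) = {0,1,…,2^n−1}, with m = 2^(n-1). -/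
def gyroOp (n : ℕ) (i j : ℕ) : ℕ :=
  let m := 2 ^ (n - 1)
  if i < m then
    if j < m then (i + j) % m
    else (i + j) % m + m
  else
    if j < m then (i + (m / 2 - 1) * j) % m + m
    else ((m / 2 + 1) * i + (m / 2 - 1) * j) % m

/-- Left powers in the gyrogroup G(n): u^1 = u and u^(k+1) = u ⊕ u^k
(with u^0 taken to be the identity 0). -/
def gyroPow (n : ℕ) (u : ℕ) : ℕ → ℕ
  | 0 => 0
  | 1 => u
  | k + 2 => gyroOp n u (gyroPow n u (k + 1))

/-- The power graph of the gyrogroup (G(n),⊕): distinct vertices u, v are adjacent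
iff u^k = v or v^k = u for some k ≥ 1. -/
def powerGraph (n : ℕ) : SimpleGraph (Fin (2 ^ n)) :=
  SimpleGraph.fromRel (fun u v => ∃ k : ℕ, 1 ≤ k ∧ gyroPow n u.val k = v.val)

/-- The graph Γ_n: distinct vertices u, v ∈ {0,…,2^n−1} are adjacent iff
(u < 2^(n-1) and v < 2^(n-1)), or u = 0, or v = 0. -/
def Gamma (n : ℕ) : SimpleGraph (Fin (2 ^ n)) :=
  SimpleGraph.fromRel
    (fun u v => (u.val < 2 ^ (n - 1) ∧ v.val < 2 ^ (n - 1)) ∨ u.val = 0 ∨ v.val = 0)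

lemma powA (n u : ℕ) (hn : 3 ≤ n) (hu : u < 2 ^ (n-1)) (k : ℕ) :
    gyroPow n u k = (k * u) % 2 ^ (n-1) := by
  have hm : 0 < 2 ^ (n-1) := Nat.pow_pos (by norm_num)
  induction k using Nat.twoStepInduction with
  | zero => simp [gyroPow]
  | one => simp [gyroPow, Nat.mod_eq_of_lt hu]
  | more k ih ih1 =>
    show gyroOp n u (gyroPow n u (k+1)) = _
    rw [ih1]
    have hlt : ((k+1) * u) % 2 ^ (n-1) < 2 ^ (n-1) := Nat.mod_lt _ hm
    simp only [gyroOp, if_pos hu, if_pos hlt]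
    rw [Nat.add_mod, Nat.mod_mod_of_dvd, ← Nat.add_mod]
    · ring_nf
    · exact dvd_refl _

lemma powB (n u : ℕ) (hn : 3 ≤ n) (hu1 : 2 ^ (n-1) ≤ u) (hu2 : u < 2 * 2 ^ (n-1)) (k : ℕ) :
    gyroPow n u k = if k % 2 = 1 then u else 0 := by
  have hm : 0 < 2 ^ (n-1) := Nat.pow_pos (by norm_num)
  have hev : 2 * (2 ^ (n-1) / 2) = 2 ^ (n-1) := by
    apply Nat.two_mul_div_two_of_even
    exact (Nat.even_pow' (by omega)).2 even_two
  induction k using Nat.twoStepInduction with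
  | zero => simp [gyroPow]
  | one => simp [gyroPow]
  | more k ih ih1 =>
    show gyroOp n u (gyroPow n u (k+1)) = _
    rw [ih1]
    rcases Nat.mod_two_eq_zero_or_one (k+1) with h | h
    · rw [if_neg (by omega)]
      have hnot : ¬ u < 2 ^ (n-1) := by omega
      simp only [gyroOp, if_neg hnot, if_pos hm, Nat.mul_zero, Nat.add_zero]
      have humod : u % 2 ^ (n-1) = u - 2 ^ (n-1) := by
        rw [Nat.mod_eq_sub_mod hu1, Nat.mod_eq_of_lt (by omega)]
      rw [humod, if_pos (by omega)]
      omega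
    · rw [if_pos h]
      have hnot : ¬ u < 2 ^ (n-1) := by omega
      simp only [gyroOp, if_neg hnot]
      have hcoef : (2 ^ (n-1) / 2 + 1) * u + (2 ^ (n-1) / 2 - 1) * u = 2 ^ (n-1) * u := by
        set q := 2 ^ (n-1) / 2 with hq
        have h2 : 1 ≤ q := by omega
        have hle : u ≤ q * u := Nat.le_mul_of_pos_left u (by omega)
        calc (q+1)*u + (q-1)*u = q*u + u + (q*u - u) := by
              rw [Nat.add_mul, Nat.sub_mul, one_mul]
          _ = 2*(q*u) := by omega
          _ = (2*q)*u := (mul_assoc 2 q u).symm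
          _ = 2 ^ (n-1) * u := by rw [hev]
      rw [hcoef, Nat.mul_mod_right, if_neg (by omega)]

lemma solve (m a b : ℕ) (hm : 0 < m) (hd : Nat.gcd a m ∣ b) :
    ∃ k : ℕ, 1 ≤ k ∧ (k * a) % m = b % m := by
  obtain ⟨c, hc⟩ := hd
  set s : ℤ := Nat.gcdA a m * c with hs
  have hbez : (Nat.gcd a m : ℤ) = a * Nat.gcdA a m + m * Nat.gcdB a m :=
    Nat.gcd_eq_gcd_ab a m
  have key : (m : ℤ) ∣ (b : ℤ) - a * s := by
    refine ⟨Nat.gcdB a m * c, ?_⟩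
    have hb : (b : ℤ) = (a * Nat.gcdA a m + m * Nat.gcdB a m) * c := by
      rw [← hbez]; exact_mod_cast congrArg (Nat.cast (R := ℤ)) hc
    rw [hb, hs]; ring
  have hmz : (m : ℤ) ≠ 0 := by exact_mod_cast hm.ne'
  have hnn : 0 ≤ s % m := Int.emod_nonneg s hmz
  refine ⟨(s % m).toNat + m, by omega, ?_⟩
  have hmod : ((s % m).toNat + m) * a ≡ b [MOD m] := by
    rw [Nat.modEq_iff_dvd]
    push_cast [Int.toNat_of_nonneg hnn]
    have h1 : (m : ℤ) ∣ s - s % m := ⟨s / m, by rw [Int.emod_def]; ring⟩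
    have h2 : (m : ℤ) ∣ ((b : ℤ) - a * s) + a * (s - s % m) - m * a :=
      dvd_sub (dvd_add key (h1.mul_left a)) (dvd_mul_right (m:ℤ) (a:ℤ))
    convert h2 using 1
    ring
  exact hmod

/-- For every n ≥ 3, the power graph of the gyrogroup G(n) is exactly Γ_n. -/
theorem stmt_0 (n : ℕ) (hn : 3 ≤ n) : powerGraph n = Gamma n := by
  have hm : 0 < 2 ^ (n-1) := Nat.pow_pos (by norm_num)
  have h2m : 2 ^ n = 2 * 2 ^ (n-1) := by
    rw [← pow_succ']; congr 1; omega
  ext u v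
  simp only [powerGraph, Gamma, SimpleGraph.fromRel_adj]
  have hub : u.val < 2 * 2 ^ (n-1) := h2m ▸ u.isLt
  have hvb : v.val < 2 * 2 ^ (n-1) := h2m ▸ v.isLt
  have key : ∀ a b : Fin (2 ^ n), a ≠ b → (∃ k, 1 ≤ k ∧ gyroPow n a.val k = b.val) →
      (a.val < 2 ^ (n-1) ∧ b.val < 2 ^ (n-1)) ∨ a.val = 0 ∨ b.val = 0 := by
    rintro a b hab ⟨k, hk1, hk⟩
    by_cases ha : a.val < 2 ^ (n-1)
    · left
      refine ⟨ha, ?_⟩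
      rw [powA n a.val hn ha k] at hk
      rw [← hk]
      exact Nat.mod_lt _ hm
    · have hab2 : a.val < 2 * 2 ^ (n-1) := h2m ▸ a.isLt
      rw [powB n a.val hn (by omega) hab2 k] at hk
      by_cases hp : k % 2 = 1
      · rw [if_pos hp] at hk
        exact absurd (Fin.ext hk) hab
      · rw [if_neg hp] at hk
        right; right; omega
  constructor
  · rintro ⟨hne, h | h⟩
    · exact ⟨hne, Or.inl (key u v hne h)⟩
    · refine ⟨hne, Or.inr ?_⟩
      exact key v u hne.symm h
  · rintro ⟨hne, h⟩
    have h' : (u.val < 2 ^ (n-1) ∧ v.val < 2 ^ (n-1)) ∨ u.val = 0 ∨ v.val = 0 := by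
      tauto
    refine ⟨hne, ?_⟩
    rcases h' with ⟨hu, hv⟩ | hu | hv
    · obtain ⟨a, ha, hae⟩ := (Nat.dvd_prime_pow Nat.prime_two).1
        (Nat.gcd_dvd_right u.val (2 ^ (n-1)))
      obtain ⟨b, hb, hbe⟩ := (Nat.dvd_prime_pow Nat.prime_two).1
        (Nat.gcd_dvd_right v.val (2 ^ (n-1)))
      rcases le_total a b with hle | hle
      · have hdvd : Nat.gcd u.val (2 ^ (n-1)) ∣ v.val := by
          rw [hae]
          exact dvd_trans (pow_dvd_pow 2 hle) (hbe ▸ Nat.gcd_dvd_left v.val (2 ^ (n-1)))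
        obtain ⟨k, hk1, hk⟩ := solve (2 ^ (n-1)) u.val v.val hm hdvd
        left
        exact ⟨k, hk1, by rw [powA n u.val hn hu k, hk, Nat.mod_eq_of_lt hv]⟩
      · have hdvd : Nat.gcd v.val (2 ^ (n-1)) ∣ u.val := by
          rw [hbe]
          exact dvd_trans (pow_dvd_pow 2 hle) (hae ▸ Nat.gcd_dvd_left u.val (2 ^ (n-1)))
        obtain ⟨k, hk1, hk⟩ := solve (2 ^ (n-1)) v.val u.val hm hdvd
        right
        exact ⟨k, hk1, by rw [powA n v.val hn hv k, hk, Nat.mod_eq_of_lt hu]⟩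
    · right
      by_cases hv : v.val < 2 ^ (n-1)
      · refine ⟨2 ^ (n-1), by omega, ?_⟩
        rw [powA n v.val hn hv, hu]
        simp [Nat.mul_mod_right]
      · refine ⟨2, by norm_num, ?_⟩
        rw [powB n v.val hn (by omega) hvb 2, hu]
        norm_num
    · left
      by_cases hu : u.val < 2 ^ (n-1)
      · refine ⟨2 ^ (n-1), by omega, ?_⟩
        rw [powA n u.val hn hu, hv]
        simp [Nat.mul_mod_right]
      · refine ⟨2, by norm_num, ?_⟩
        rw [powB n u.val hn (by omega) hub 2, hv]
        norm_num
end

section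
/- For every integer n ≥ 3, the reciprocal status of the vertices of Γ_n is: rs(0) = 2^n − 1; rs(u) = 3·2^{n-2} − 1 for every u with 1 ≤ u ≤ 2^{n-1} − 1; and rs(w) = 2^{n-1} for every w with 2^{n-1} ≤ w ≤ 2^n − 1. -/
open Finset

open Classical in
/-- The reciprocal status of a vertex v: rs(v) = Σ_{u ≠ v} 1/d(u,v). -/
noncomputable def rs (n : ℕ) (v : Fin (2 ^ n)) : ℝ :=
  ∑ u ∈ univ.filter (fun u : Fin (2 ^ n) => u ≠ v), (1 : ℝ) / ((Gamma n).dist u v)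

lemma gamma_adj_iff {n : ℕ} {u v : Fin (2 ^ n)} :
    (Gamma n).Adj u v ↔ u ≠ v ∧
      ((u.val < 2 ^ (n - 1) ∧ v.val < 2 ^ (n - 1)) ∨ u.val = 0 ∨ v.val = 0) := by
  simp only [Gamma, SimpleGraph.fromRel_adj]
  tauto

lemma gamma_dist_adj {n : ℕ} {u v : Fin (2 ^ n)} (h : (Gamma n).Adj u v) :
    (Gamma n).dist u v = 1 :=
  SimpleGraph.dist_eq_one_iff_adj.mpr h

lemma gamma_dist_two {n : ℕ} {u v : Fin (2 ^ n)} (hne : u ≠ v)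
    (hna : ¬ (Gamma n).Adj u v) : (Gamma n).dist u v = 2 := by
  have hu0 : u.val ≠ 0 := by
    intro h; exact hna (gamma_adj_iff.mpr ⟨hne, Or.inr (Or.inl h)⟩)
  have hv0 : v.val ≠ 0 := by
    intro h; exact hna (gamma_adj_iff.mpr ⟨hne, Or.inr (Or.inr h)⟩)
  have h1 : (Gamma n).Adj u ⟨0, Nat.two_pow_pos n⟩ :=
    gamma_adj_iff.mpr ⟨fun h => hu0 (by rw [h]), Or.inr (Or.inr rfl)⟩
  have h2 : (Gamma n).Adj (⟨0, Nat.two_pow_pos n⟩ : Fin (2 ^ n)) v :=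
    gamma_adj_iff.mpr ⟨fun h => hv0 (by rw [← h]), Or.inr (Or.inl rfl)⟩
  have hle : (Gamma n).dist u v ≤ 2 := by
    have := SimpleGraph.dist_le
      (SimpleGraph.Walk.cons h1 (SimpleGraph.Walk.cons h2 SimpleGraph.Walk.nil))
    exact this
  have hpos : 0 < (Gamma n).dist u v :=
    SimpleGraph.Reachable.pos_dist_of_ne
      ⟨SimpleGraph.Walk.cons h1 (SimpleGraph.Walk.cons h2 SimpleGraph.Walk.nil)⟩ hne
  have hne1 : (Gamma n).dist u v ≠ 1 := fun h =>
    hna (SimpleGraph.dist_eq_one_iff_adj.mp h)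
  omega

lemma card_filter_lt {N k : ℕ} (hk : k < N) :
    (univ.filter fun u : Fin N => u.val < k).card = k := by
  have : (univ.filter fun u : Fin N => u.val < k) = Finset.Iio ⟨k, hk⟩ := by
    ext u; simp [Fin.lt_def]
  rw [this, Fin.card_Iio]

lemma card_filter_eq_zero {N : ℕ} (hN : 0 < N) :
    (univ.filter fun u : Fin N => u.val = 0).card = 1 := by
  have : (univ.filter fun u : Fin N => u.val = 0) = {⟨0, hN⟩} := by
    ext u; simp [Fin.ext_iff]
  rw [this, card_singleton]

/-- For every n ≥ 3: rs(0) = 2^n − 1, rs(u) = 3·2^(n-2) − 1 for 1 ≤ u ≤ 2^(n-1)−1,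
and rs(w) = 2^(n-1) for w ≥ 2^(n-1). -/
theorem stmt_7 (n : ℕ) (hn : 3 ≤ n) :
    rs n ⟨0, Nat.two_pow_pos n⟩ = 2 ^ n - 1 ∧
    (∀ u : Fin (2 ^ n), 1 ≤ u.val → u.val ≤ 2 ^ (n - 1) - 1 →
      rs n u = 3 * 2 ^ (n - 2) - 1) ∧
    (∀ w : Fin (2 ^ n), 2 ^ (n - 1) ≤ w.val → rs n w = 2 ^ (n - 1)) := by
  have hhalf : 2 ^ (n - 1) < 2 ^ n := Nat.pow_lt_pow_right one_lt_two (by omega)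
  have epow1 : 2 ^ n = 2 * 2 ^ (n - 1) := by
    rw [← pow_succ']; congr 1; omega
  have epow2 : (2 : ℕ) ^ (n - 1) = 2 * 2 ^ (n - 2) := by
    rw [← pow_succ']; congr 1; omega
  refine ⟨?_, ?_, ?_⟩
  · -- rs(0)
    rw [rs]
    rw [Finset.sum_congr rfl (fun u hu => ?_) (g := fun _ => (1 : ℝ))]
    · rw [Finset.sum_const, Finset.filter_ne',
        Finset.card_erase_of_mem (mem_univ _), Finset.card_univ, Fintype.card_fin,
        nsmul_eq_mul, mul_one]
      have h1 : (1 : ℕ) ≤ 2 ^ n := Nat.one_le_two_pow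
      push_cast [h1]
      ring
    · simp only [mem_filter] at hu
      have : (Gamma n).Adj u ⟨0, Nat.two_pow_pos n⟩ :=
        gamma_adj_iff.mpr ⟨hu.2, Or.inr (Or.inr rfl)⟩
      rw [gamma_dist_adj this]; norm_num
  · -- middle vertices
    intro u hu1 hu2
    have hhpos : 0 < 2 ^ (n - 1) := Nat.two_pow_pos _
    have huh : u.val < 2 ^ (n - 1) := by omega
    rw [rs]
    rw [Finset.sum_congr rfl (fun w hw => ?_) (g := fun w =>
        if w.val < 2 ^ (n - 1) then (1 : ℝ) else 1 / 2)]
    · rw [Finset.sum_ite, Finset.sum_const, Finset.sum_const]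
      rw [Finset.filter_ne', Finset.filter_erase, Finset.filter_erase]
      have hmem : u ∈ univ.filter fun w : Fin (2 ^ n) => w.val < 2 ^ (n - 1) := by
        simp only [mem_filter, mem_univ, true_and]; exact huh
      rw [Finset.card_erase_of_mem hmem, card_filter_lt hhalf]
      have hnot : u ∉ univ.filter fun w : Fin (2 ^ n) => ¬ w.val < 2 ^ (n - 1) := by
        simp only [mem_filter, mem_univ, true_and, not_not, not_lt]
        omega
      rw [Finset.erase_eq_of_notMem hnot]
      have hcard : (univ.filter fun w : Fin (2 ^ n) => ¬ w.val < 2 ^ (n - 1)).card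
          = 2 ^ n - 2 ^ (n - 1) := by
        have := Finset.card_filter_add_card_filter_not
          (s := (univ : Finset (Fin (2 ^ n)))) (p := fun w => w.val < 2 ^ (n - 1))
        rw [card_filter_lt hhalf, Finset.card_univ, Fintype.card_fin] at this
        omega
      rw [hcard]
      have e1 : 2 ^ n - 2 ^ (n - 1) = 2 * 2 ^ (n - 2) := by omega
      have e2 : 2 ^ (n - 1) - 1 = 2 * 2 ^ (n - 2) - 1 := by omega
      rw [e1, e2, nsmul_eq_mul, nsmul_eq_mul]
      have h1 : (1 : ℕ) ≤ 2 * 2 ^ (n - 2) := by have := Nat.two_pow_pos (n - 2); omega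
      push_cast [h1]
      ring
    · simp only [mem_filter] at hw
      show (1 : ℝ) / ((Gamma n).dist w u) = if w.val < 2 ^ (n - 1) then (1 : ℝ) else 1 / 2
      by_cases h : w.val < 2 ^ (n - 1)
      · rw [if_pos h]
        norm_num [gamma_dist_adj (gamma_adj_iff.mpr ⟨hw.2, Or.inl ⟨h, huh⟩⟩)]
      · rw [if_neg h]
        have hna : ¬ (Gamma n).Adj w u := by
          rw [gamma_adj_iff]
          rintro ⟨-, (⟨h1, -⟩ | h1 | h1)⟩
          · exact h h1
          · omega
          · omega
        norm_num [gamma_dist_two hw.2 hna]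
  · -- heavy vertices
    intro w hw
    have hhpos : 0 < 2 ^ (n - 1) := Nat.two_pow_pos _
    have hw0 : w.val ≠ 0 := by omega
    rw [rs]
    rw [Finset.sum_congr rfl (fun u hu => ?_) (g := fun u =>
        if u.val = 0 then (1 : ℝ) else 1 / 2)]
    · rw [Finset.sum_ite, Finset.sum_const, Finset.sum_const]
      rw [Finset.filter_ne', Finset.filter_erase, Finset.filter_erase]
      have h1 : w ∉ univ.filter fun u : Fin (2 ^ n) => u.val = 0 := by
        simp only [mem_filter, mem_univ, true_and]; exact hw0
      rw [Finset.erase_eq_of_notMem h1, card_filter_eq_zero (Nat.two_pow_pos n)]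
      have h2 : w ∈ univ.filter fun u : Fin (2 ^ n) => ¬ u.val = 0 := by
        simp only [mem_filter, mem_univ, true_and]; exact hw0
      rw [Finset.card_erase_of_mem h2]
      have hcard : (univ.filter fun u : Fin (2 ^ n) => ¬ u.val = 0).card
          = 2 ^ n - 1 := by
        have := Finset.card_filter_add_card_filter_not
          (s := (univ : Finset (Fin (2 ^ n)))) (p := fun u : Fin (2 ^ n) => u.val = 0)
        rw [card_filter_eq_zero (Nat.two_pow_pos n), Finset.card_univ, Fintype.card_fin] at this
        omega
      rw [hcard]
      have e1 : 2 ^ n - 1 - 1 = 2 * 2 ^ (n - 1) - 2 := by omega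
      rw [e1, nsmul_eq_mul, nsmul_eq_mul]
      have h3 : (2 : ℕ) ≤ 2 * 2 ^ (n - 1) := by have := Nat.two_pow_pos (n - 1); omega
      push_cast [h3]
      ring
    · simp only [mem_filter] at hu
      show (1 : ℝ) / ((Gamma n).dist u w) = if u.val = 0 then (1 : ℝ) else 1 / 2
      by_cases h : u.val = 0
      · rw [if_pos h]
        norm_num [gamma_dist_adj (gamma_adj_iff.mpr ⟨hu.2, Or.inr (Or.inl h)⟩)]
      · rw [if_neg h]
        have hna : ¬ (Gamma n).Adj u w := by
          rw [gamma_adj_iff]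
          rintro ⟨-, (⟨-, h1⟩ | h1 | h1)⟩
          · omega
          · exact h h1
          · exact hw0 h1
        norm_num [gamma_dist_two hu.2 hna]
end

section
/- For every integer n ≥ 3, the metric dimension of Γ_n equals 2^n − 3; that is, the minimum cardinality of a resolving set of Γ_n is 2^n − 3. -/
set_option maxHeartbeats 1000000


/-- A finite set S of vertices is a resolving set of a graph G if distinct vertices
have distinct vectors of graph distances to the elements of S. -/
def IsResolving {V : Type*} (G : SimpleGraph V) (S : Finset V) : Prop :=
  ∀ u v : V, (∀ s ∈ S, G.dist u s = G.dist v s) → u = v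

namespace GammaAux

lemma adj_iff {n : ℕ} (u v : Fin (2 ^ n)) :
    (Gamma n).Adj u v ↔ u ≠ v ∧
      ((u.val < 2 ^ (n - 1) ∧ v.val < 2 ^ (n - 1)) ∨ u.val = 0 ∨ v.val = 0) := by
  simp only [Gamma, SimpleGraph.fromRel_adj]
  tauto

lemma dist_eq_two {n : ℕ} (u v : Fin (2 ^ n)) (hne : u ≠ v)
    (hna : ¬ (Gamma n).Adj u v) : (Gamma n).dist u v = 2 := by
  have hu0 : u.val ≠ 0 := by
    intro h; exact hna ((adj_iff u v).2 ⟨hne, Or.inr (Or.inl h)⟩)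
  have hv0 : v.val ≠ 0 := by
    intro h; exact hna ((adj_iff u v).2 ⟨hne, Or.inr (Or.inr h)⟩)
  have hz : (0 : ℕ) < 2 ^ n := Nat.two_pow_pos n
  set z : Fin (2 ^ n) := ⟨0, hz⟩ with hzdef
  have huz : u ≠ z := by
    intro h; apply hu0; rw [h]
  have hvz : z ≠ v := by
    intro h; apply hv0; rw [← h]
  have a1 : (Gamma n).Adj u z := (adj_iff u z).2 ⟨huz, Or.inr (Or.inr rfl)⟩
  have a2 : (Gamma n).Adj z v := (adj_iff z v).2 ⟨hvz, Or.inr (Or.inl rfl)⟩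
  have hle : (Gamma n).dist u v ≤ 2 := by
    have := (Gamma n).dist_le (SimpleGraph.Walk.cons a1 (SimpleGraph.Walk.cons a2 SimpleGraph.Walk.nil))
    simpa using this
  have hne0 : (Gamma n).dist u v ≠ 0 := by
    have hr : (Gamma n).Reachable u v := ⟨SimpleGraph.Walk.cons a1 (SimpleGraph.Walk.cons a2 SimpleGraph.Walk.nil)⟩
    rw [ne_eq, SimpleGraph.dist_eq_zero_iff_eq_or_not_reachable]
    push_neg
    exact ⟨hne, hr⟩
  have hne1 : (Gamma n).dist u v ≠ 1 := by
    rw [ne_eq, SimpleGraph.dist_eq_one_iff_adj]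
    exact hna
  omega

lemma dist_eq_one {n : ℕ} {u v : Fin (2 ^ n)} (h : (Gamma n).Adj u v) :
    (Gamma n).dist u v = 1 := SimpleGraph.dist_eq_one_iff_adj.2 h

/-- Distance from a "petal" vertex (0 < u < m) to any s ≠ u. -/
lemma dist_petal {n : ℕ} (u s : Fin (2 ^ n)) (hne : u ≠ s)
    (hu0 : u.val ≠ 0) (hum : u.val < 2 ^ (n - 1)) :
    (Gamma n).dist u s = if s.val < 2 ^ (n - 1) then 1 else 2 := by
  by_cases hs : s.val < 2 ^ (n - 1)
  · rw [if_pos hs]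
    exact dist_eq_one ((adj_iff u s).2 ⟨hne, Or.inl ⟨hum, hs⟩⟩)
  · rw [if_neg hs]
    apply dist_eq_two u s hne
    rw [adj_iff]
    push_neg
    intro _
    refine ⟨fun _ => Nat.le_of_not_lt hs, hu0, fun h => hs ?_⟩
    rw [h]; exact Nat.two_pow_pos _
/-- Distance from a "hair" vertex (u ≥ m) to any s ≠ u. -/
lemma dist_hair {n : ℕ} (u s : Fin (2 ^ n)) (hne : u ≠ s)
    (hum : ¬ u.val < 2 ^ (n - 1)) :
    (Gamma n).dist u s = if s.val = 0 then 1 else 2 := by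
  have hu0 : u.val ≠ 0 := by
    intro h; apply hum; rw [h]; exact Nat.two_pow_pos _
  by_cases hs : s.val = 0
  · rw [if_pos hs]
    exact dist_eq_one ((adj_iff u s).2 ⟨hne, Or.inr (Or.inr hs)⟩)
  · rw [if_neg hs]
    apply dist_eq_two u s hne
    rw [adj_iff]
    push_neg
    exact fun _ => ⟨fun h => absurd h hum, hu0, hs⟩

lemma dist_pos {n : ℕ} {u v : Fin (2 ^ n)} (h : (Gamma n).dist u v = 0) (hne : u ≠ v) : False := by
  by_cases ha : (Gamma n).Adj u v
  · rw [dist_eq_one ha] at h; exact one_ne_zero h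
  · rw [dist_eq_two u v hne ha] at h; omega

end GammaAux

open GammaAux in
/-- For every n ≥ 3, the metric dimension of Γ_n is 2^n − 3: the minimum cardinality
of a resolving set of Γ_n is 2^n − 3. -/
theorem stmt_10 (n : ℕ) (hn : 3 ≤ n) :
    IsLeast {k : ℕ | ∃ S : Finset (Fin (2 ^ n)), IsResolving (Gamma n) S ∧ S.card = k}
      (2 ^ n - 3) := by
  have hz : (0 : ℕ) < 2 ^ n := Nat.two_pow_pos n
  have hm : 4 ≤ 2 ^ (n - 1) := by
    calc (4 : ℕ) = 2 ^ 2 := rfl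
    _ ≤ 2 ^ (n - 1) := Nat.pow_le_pow_right (by norm_num) (by omega)
  have hmn : 2 ^ (n - 1) * 2 = 2 ^ n := by
    rw [← pow_succ]
    congr 1
    omega
  have hmlt : 2 ^ (n - 1) < 2 ^ n := by omega
  set m := 2 ^ (n - 1) with hmdef
  constructor
  · -- upper bound: construct a resolving set of size 2^n - 3
    set z : Fin (2 ^ n) := ⟨0, hz⟩ with hzdef
    set p0 : Fin (2 ^ n) := ⟨1, by omega⟩ with hp0def
    set h0 : Fin (2 ^ n) := ⟨m, hmlt⟩ with hh0def
    set p1 : Fin (2 ^ n) := ⟨2, by omega⟩ with hp1def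
    set h1 : Fin (2 ^ n) := ⟨m + 1, by omega⟩ with hh1def
    set T : Finset (Fin (2 ^ n)) := {z, p0, h0} with hTdef
    refine ⟨Finset.univ \ T, ?_, ?_⟩
    · intro u v h
      by_contra hne
      -- if u ∈ S, use s = u
      by_cases huS : u ∈ Finset.univ \ T
      · have := h u huS
        rw [SimpleGraph.dist_self] at this
        exact dist_pos this.symm (Ne.symm hne)
      by_cases hvS : v ∈ Finset.univ \ T
      · have := h v hvS
        rw [SimpleGraph.dist_self] at this
        exact dist_pos this hne
      -- both u, v ∈ T = {z, p0, h0}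
      have huT : u ∈ T := by
        by_contra hc; exact huS (Finset.mem_sdiff.2 ⟨Finset.mem_univ _, hc⟩)
      have hvT : v ∈ T := by
        by_contra hc; exact hvS (Finset.mem_sdiff.2 ⟨Finset.mem_univ _, hc⟩)
      have hp1S : p1 ∈ Finset.univ \ T := by
        refine Finset.mem_sdiff.2 ⟨Finset.mem_univ _, ?_⟩
        simp only [hTdef, Finset.mem_insert, Finset.mem_singleton]
        push_neg
        refine ⟨?_, ?_, ?_⟩ <;> · intro hc
                                  have := congrArg Fin.val hc
                                  simp [hp1def, hzdef, hp0def, hh0def] at this <;> omega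
      have hh1S : h1 ∈ Finset.univ \ T := by
        refine Finset.mem_sdiff.2 ⟨Finset.mem_univ _, ?_⟩
        simp only [hTdef, Finset.mem_insert, Finset.mem_singleton]
        push_neg
        refine ⟨?_, ?_, ?_⟩ <;> · intro hc
                                  have := congrArg Fin.val hc
                                  simp [hh1def, hzdef, hp0def, hh0def] at this <;> omega
      -- distances of z, p0, h0 to p1 and h1
      have dzp1 : (Gamma n).dist z p1 = 1 :=
        dist_eq_one ((adj_iff z p1).2 ⟨by simp [hzdef, hp1def, Fin.ext_iff], Or.inr (Or.inl rfl)⟩)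
      have dzh1 : (Gamma n).dist z h1 = 1 :=
        dist_eq_one ((adj_iff z h1).2 ⟨by simp [hzdef, hh1def, Fin.ext_iff] <;> omega, Or.inr (Or.inl rfl)⟩)
      have dp0p1 : (Gamma n).dist p0 p1 = 1 := by
        have := dist_petal (n := n) p0 p1 (by simp [hp0def, hp1def, Fin.ext_iff]) (by simp [hp0def]) (by simp [hp0def] <;> omega)
        rw [this, if_pos (by simp [hp1def] <;> omega)]
      have dp0h1 : (Gamma n).dist p0 h1 = 2 := by
        have := dist_petal (n := n) p0 h1 (by simp [hp0def, hh1def, Fin.ext_iff] <;> omega) (by simp [hp0def]) (by simp [hp0def] <;> omega)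
        rw [this, if_neg (by simp [hh1def] <;> omega)]
      have dh0p1 : (Gamma n).dist h0 p1 = 2 := by
        have := dist_hair (n := n) h0 p1 (by simp [hh0def, hp1def, Fin.ext_iff] <;> omega) (by simp [hh0def] <;> omega)
        rw [this, if_neg (by simp [hp1def])]
      have dh0h1 : (Gamma n).dist h0 h1 = 2 := by
        have := dist_hair (n := n) h0 h1 (by simp [hh0def, hh1def, Fin.ext_iff]) (by simp [hh0def] <;> omega)
        rw [this, if_neg (by simp [hh1def] <;> omega)]
      have hp1eq := h p1 hp1S
      have hh1eq := h h1 hh1S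
      simp only [hTdef, Finset.mem_insert, Finset.mem_singleton] at huT hvT
      rcases huT with rfl | rfl | rfl <;> rcases hvT with rfl | rfl | rfl <;>
        first
        | exact hne rfl
        | omega
    · -- cardinality
      have hTcard : T.card = 3 := by
        rw [hTdef]
        rw [Finset.card_insert_of_notMem, Finset.card_insert_of_notMem, Finset.card_singleton]
        · simp only [Finset.mem_singleton]
          intro hc
          have := congrArg Fin.val hc
          simp [hp0def, hh0def] at this <;> omega
        · simp only [Finset.mem_insert, Finset.mem_singleton]
          push_neg
          constructor <;> · intro hc
                            have := congrArg Fin.val hc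
                            simp [hzdef, hp0def, hh0def] at this <;> omega
      rw [Finset.card_sdiff_of_subset (Finset.subset_univ _), hTcard, Finset.card_univ, Fintype.card_fin]
  · -- lower bound
    rintro k ⟨S, hres, rfl⟩
    have hcompl : Sᶜ.card ≤ 3 := by
      classical
      have key : ∀ u ∈ Sᶜ, ∀ v ∈ Sᶜ,
          (if u.val = 0 then 0 else if u.val < m then 1 else 2) =
          (if v.val = 0 then 0 else if v.val < m then 1 else (2:ℕ)) → u = v := by
        intro u hu v hv hc
        by_cases hu0 : u.val = 0 <;> by_cases hv0 : v.val = 0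
        · exact Fin.ext (hu0.trans hv0.symm)
        · simp [hu0, hv0] at hc; split at hc <;> omega
        · simp [hu0, hv0] at hc; split at hc <;> omega
        · by_cases hum : u.val < m <;> by_cases hvm : v.val < m
          · -- both petals: twins
            apply hres
            intro s hs
            have hsu : u ≠ s := by rintro rfl; exact (Finset.mem_compl.1 hu) hs
            have hsv : v ≠ s := by rintro rfl; exact (Finset.mem_compl.1 hv) hs
            rw [dist_petal u s hsu hu0 hum, dist_petal v s hsv hv0 hvm]
          · simp [hu0, hv0, hum, hvm] at hc
          · simp [hu0, hv0, hum, hvm] at hc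
          · -- both hairs: twins
            apply hres
            intro s hs
            have hsu : u ≠ s := by rintro rfl; exact (Finset.mem_compl.1 hu) hs
            have hsv : v ≠ s := by rintro rfl; exact (Finset.mem_compl.1 hv) hs
            rw [dist_hair u s hsu hum, dist_hair v s hsv hvm]
      calc Sᶜ.card ≤ ({0, 1, 2} : Finset ℕ).card := by
            apply Finset.card_le_card_of_injOn
              (fun u => if u.val = 0 then 0 else if u.val < m then 1 else 2)
            · intro a _
              by_cases h1 : a.val = 0 <;> by_cases h2 : a.val < m <;> simp [h1, h2]
            · intro a ha b hb hab
              exact key a (by simpa using ha) b (by simpa using hb) hab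
        _ = 3 := by decide
    have := Finset.card_add_card_compl S
    rw [Fintype.card_fin] at this
    omega
end

section
/- For every integer n ≥ 3, the set B = {2, 3, …, 2^{n-1}−1} ∪ {2^{n-1}+1, …, 2^n−1} (i.e., P(n) with 0 and 1 removed, together with H(n) with 2^{n-1} removed) is a resolving set of Γ_n of cardinality 2^n − 3. -/
open Finset

section aux

variable {n : ℕ}

lemma gamma_adj (u v : Fin (2 ^ n)) :
    (Gamma n).Adj u v ↔ u ≠ v ∧
      ((u.val < 2 ^ (n - 1) ∧ v.val < 2 ^ (n - 1)) ∨ u.val = 0 ∨ v.val = 0) := by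
  simp only [Gamma, SimpleGraph.fromRel_adj]
  tauto

lemma gamma_adj_zero (u z : Fin (2 ^ n)) (hz : z.val = 0) (hu : u.val ≠ 0) :
    (Gamma n).Adj u z := by
  rw [gamma_adj]
  exact ⟨fun h => hu (h ▸ hz), Or.inr (Or.inr hz)⟩

lemma gamma_reachable (u v : Fin (2 ^ n)) : (Gamma n).Reachable u v := by
  have hpos : 0 < 2 ^ n := Nat.pow_pos (by norm_num)
  by_cases huv : u = v
  · exact huv ▸ SimpleGraph.Reachable.refl _
  by_cases hu0 : u.val = 0
  · have hv0 : v.val ≠ 0 := fun h => huv (Fin.ext (by omega))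
    exact ((gamma_adj_zero v u hu0 hv0).reachable).symm
  by_cases hv0 : v.val = 0
  · exact (gamma_adj_zero u v hv0 hu0).reachable
  · have h1 := gamma_adj_zero u ⟨0, hpos⟩ rfl hu0
    have h2 := gamma_adj_zero v ⟨0, hpos⟩ rfl hv0
    exact h1.reachable.trans h2.reachable.symm

lemma gamma_dist (u v : Fin (2 ^ n)) :
    (Gamma n).dist u v =
      if u = v then 0 else
      if (u.val < 2 ^ (n - 1) ∧ v.val < 2 ^ (n - 1)) ∨ u.val = 0 ∨ v.val = 0 then 1
      else 2 := by
  by_cases h : u = v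
  · simp [h]
  rw [if_neg h]
  by_cases hadj : (Gamma n).Adj u v
  · rw [if_pos ((gamma_adj u v).mp hadj).2]
    exact SimpleGraph.dist_eq_one_iff_adj.mpr hadj
  · have hcond : ¬((u.val < 2 ^ (n - 1) ∧ v.val < 2 ^ (n - 1)) ∨ u.val = 0 ∨ v.val = 0) := by
      intro hc; exact hadj ((gamma_adj u v).mpr ⟨h, hc⟩)
    rw [if_neg hcond]
    have hpos : 0 < 2 ^ n := Nat.pow_pos (by norm_num)
    have hu0 : u.val ≠ 0 := fun h0 => hcond (Or.inr (Or.inl h0))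
    have hv0 : v.val ≠ 0 := fun h0 => hcond (Or.inr (Or.inr h0))
    have h1 := gamma_adj_zero u ⟨0, hpos⟩ rfl hu0
    have h2 := gamma_adj_zero v ⟨0, hpos⟩ rfl hv0
    have hle : (Gamma n).dist u v ≤ 2 := by
      have := SimpleGraph.dist_le (h1.toWalk.append h2.toWalk.reverse)
      exact this.trans (le_of_eq rfl)
    have hne0 : (Gamma n).dist u v ≠ 0 := fun h0 =>
      h ((gamma_reachable u v).dist_eq_zero_iff.mp h0)
    have hne1 : (Gamma n).dist u v ≠ 1 := fun h1' =>
      hadj (SimpleGraph.dist_eq_one_iff_adj.mp h1')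
    omega

end aux

/-- For every n ≥ 3, the set B = {2,…,2^(n-1)−1} ∪ {2^(n-1)+1,…,2^n−1} is a
resolving set of Γ_n of cardinality 2^n − 3. -/
theorem stmt_11 (n : ℕ) (hn : 3 ≤ n) :
    IsResolving (Gamma n)
      (univ.filter (fun v : Fin (2 ^ n) =>
        (2 ≤ v.val ∧ v.val < 2 ^ (n - 1)) ∨ 2 ^ (n - 1) + 1 ≤ v.val)) ∧
    (univ.filter (fun v : Fin (2 ^ n) =>
        (2 ≤ v.val ∧ v.val < 2 ^ (n - 1)) ∨ 2 ^ (n - 1) + 1 ≤ v.val)).card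
      = 2 ^ n - 3 := by
  set m := 2 ^ (n - 1) with hm
  have hm4 : 4 ≤ m := by
    calc 4 = 2 ^ 2 := by norm_num
    _ ≤ 2 ^ (n - 1) := Nat.pow_le_pow_right (by norm_num) (by omega)
  have h2n : 2 ^ n = 2 * m := by
    rw [hm, ← pow_succ']
    congr 1
    omega
  constructor
  · intro u v h
    by_contra hne
    have key : ∀ a b : Fin (2 ^ n), a ≠ b →
        (∀ s ∈ univ.filter (fun v : Fin (2 ^ n) =>
          (2 ≤ v.val ∧ v.val < m) ∨ m + 1 ≤ v.val), (Gamma n).dist a s = (Gamma n).dist b s) →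
        ¬((2 ≤ a.val ∧ a.val < m) ∨ m + 1 ≤ a.val) := by
      intro a b hab hd hc
      have hmem : a ∈ univ.filter (fun v : Fin (2 ^ n) =>
          (2 ≤ v.val ∧ v.val < m) ∨ m + 1 ≤ v.val) := by
        simp only [mem_filter, mem_univ, true_and]; exact hc
      have h0 := hd a hmem
      rw [SimpleGraph.dist_self] at h0
      exact hab (((gamma_reachable b a).dist_eq_zero_iff.mp h0.symm).symm)
    have hu := key u v hne h
    have hv := key v u (Ne.symm hne) (fun s hs => (h s hs).symm)
    have hub : u.val < 2 * m := h2n ▸ u.isLt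
    have hvb : v.val < 2 * m := h2n ▸ v.isLt
    have hu3 : u.val = 0 ∨ u.val = 1 ∨ u.val = m := by omega
    have hv3 : v.val = 0 ∨ v.val = 1 ∨ v.val = m := by omega
    have hs1lt : m + 1 < 2 ^ n := by omega
    have hs2lt : 2 < 2 ^ n := by omega
    have hmem1 : (⟨m + 1, hs1lt⟩ : Fin (2 ^ n)) ∈ univ.filter (fun v : Fin (2 ^ n) =>
        (2 ≤ v.val ∧ v.val < m) ∨ m + 1 ≤ v.val) := by
      simp only [mem_filter, mem_univ, true_and]
      exact Or.inr (Nat.le_refl _)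
    have hmem2 : (⟨2, hs2lt⟩ : Fin (2 ^ n)) ∈ univ.filter (fun v : Fin (2 ^ n) =>
        (2 ≤ v.val ∧ v.val < m) ∨ m + 1 ≤ v.val) := by
      simp only [mem_filter, mem_univ, true_and]
      exact Or.inl ⟨Nat.le_refl 2, show (2:ℕ) < m by omega⟩
    have hd1 := h _ hmem1
    have hd2 := h _ hmem2
    rw [gamma_dist, gamma_dist] at hd1 hd2
    have hne' : u.val ≠ v.val := fun hh => hne (Fin.ext hh)
    have hus1 : u ≠ ⟨m + 1, hs1lt⟩ := fun hh => by
      have : u.val = m + 1 := congrArg Fin.val hh; omega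
    have hvs1 : v ≠ ⟨m + 1, hs1lt⟩ := fun hh => by
      have : v.val = m + 1 := congrArg Fin.val hh; omega
    have hus2 : u ≠ ⟨2, hs2lt⟩ := fun hh => by
      have : u.val = 2 := congrArg Fin.val hh; omega
    have hvs2 : v ≠ ⟨2, hs2lt⟩ := fun hh => by
      have : v.val = 2 := congrArg Fin.val hh; omega
    rw [if_neg hus1, if_neg hvs1] at hd1
    rw [if_neg hus2, if_neg hvs2] at hd2
    have e1 : ((⟨m + 1, hs1lt⟩ : Fin (2 ^ n)) : ℕ) = m + 1 := rfl
    have e2 : ((⟨2, hs2lt⟩ : Fin (2 ^ n)) : ℕ) = 2 := rfl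
    rw [e1] at hd1
    rw [e2] at hd2
    have c1 : ¬(m + 1 < 2 ^ (n - 1)) := by omega
    have c2 : ¬(m + 1 = 0) := by omega
    have c3 : (2:ℕ) < 2 ^ (n - 1) := by omega
    have c4 : ¬((2:ℕ) = 0) := by omega
    have c5 : ∀ k : ℕ, (k < 2 ^ (n - 1) ∨ k = 0) ↔ k < 2 ^ (n - 1) := fun k => by omega
    simp only [eq_false c1, eq_false c2, eq_true c3, eq_false c4, and_false, and_true,
      false_or, or_false, c5] at hd1 hd2
    rcases hu3 with h0 | h1 | hM <;> rcases hv3 with g0 | g1 | gM <;>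
      split_ifs at hd1 hd2 <;> omega
  · have h0lt : 0 < 2 ^ n := by omega
    have h1lt : 1 < 2 ^ n := by omega
    have hmlt : m < 2 ^ n := by omega
    have val0 : ((⟨0, h0lt⟩ : Fin (2 ^ n)) : ℕ) = 0 := rfl
    have val1 : ((⟨1, h1lt⟩ : Fin (2 ^ n)) : ℕ) = 1 := rfl
    have valm : ((⟨m, hmlt⟩ : Fin (2 ^ n)) : ℕ) = m := rfl
    have hcompl : (univ.filter (fun v : Fin (2 ^ n) =>
        ¬((2 ≤ v.val ∧ v.val < m) ∨ m + 1 ≤ v.val))).card = 3 := by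
      have hset : (univ.filter (fun v : Fin (2 ^ n) =>
          ¬((2 ≤ v.val ∧ v.val < m) ∨ m + 1 ≤ v.val))) =
          {⟨0, h0lt⟩, ⟨1, h1lt⟩, ⟨m, hmlt⟩} := by
        ext v
        simp only [mem_filter, mem_univ, true_and, mem_insert, mem_singleton]
        constructor
        · intro hv
          have hb : v.val < 2 * m := h2n ▸ v.isLt
          have hv3 : v.val = 0 ∨ v.val = 1 ∨ v.val = m := by omega
          rcases hv3 with h | h | h
          · exact Or.inl (Fin.ext h)
          · exact Or.inr (Or.inl (Fin.ext h))
          · exact Or.inr (Or.inr (Fin.ext h))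
        · rintro (rfl | rfl | rfl) <;> simp only [val0, val1, valm] <;> omega
      rw [hset]
      have d1 : (⟨0, h0lt⟩ : Fin (2 ^ n)) ∉
          ({⟨1, h1lt⟩, ⟨m, hmlt⟩} : Finset (Fin (2 ^ n))) := by
        simp only [mem_insert, mem_singleton]
        rintro (hh | hh)
        · exact absurd (show (0:ℕ) = 1 from congrArg Fin.val hh) (by omega)
        · exact absurd (show (0:ℕ) = m from congrArg Fin.val hh) (by omega)
      have d2 : (⟨1, h1lt⟩ : Fin (2 ^ n)) ∉ ({⟨m, hmlt⟩} : Finset (Fin (2 ^ n))) := by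
        simp only [mem_singleton]
        intro hh
        exact absurd (show (1:ℕ) = m from congrArg Fin.val hh) (by omega)
      rw [card_insert_of_notMem d1, card_insert_of_notMem d2, card_singleton]
    have hsum := card_filter_add_card_filter_not (s := (univ : Finset (Fin (2 ^ n))))
      (p := fun v : Fin (2 ^ n) => (2 ≤ v.val ∧ v.val < m) ∨ m + 1 ≤ v.val)
    rw [card_univ, Fintype.card_fin] at hsum
    omega
end

section
/- For every integer n ≥ 3, the numbers of resolving sets of Γ_n of given cardinality are: exactly 2^{n-1}(2^{n-1}−1) resolving sets of cardinality 2^n − 3; exactly 2^{2n-2} + 2^{n-1} − 1 resolving sets of cardinality 2^n − 2; exactly 2^n resolving sets of cardinality 2^n − 1; and exactly 1 resolving set of cardinality 2^n (the whole vertex set). Consequently the resolving polynomial of Γ_n is ψ(Γ_n, x) = x^{2^n} + 2^n x^{2^n−1} + (2^{2n-2} + 2^{n-1} − 1) x^{2^n−2} + (2^{2n-2} − 2^{n-1}) x^{2^n−3}. -/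
open Finset Polynomial

open Classical in
/-- r_k : the number of resolving sets of Γ_n of cardinality k. -/
noncomputable def resolvingCount (n k : ℕ) : ℕ :=
  (univ.filter (fun S : Finset (Fin (2 ^ n)) =>
    IsResolving (Gamma n) S ∧ S.card = k)).card

namespace Stmt12Aux

variable {n : ℕ}

/-- the "small nonzero" class -/
def pP (n : ℕ) (x : Fin (2^n)) : Prop := x.val ≠ 0 ∧ x.val < 2^(n-1)
/-- the "large" class -/
def pH (n : ℕ) (x : Fin (2^n)) : Prop := 2^(n-1) ≤ x.val

lemma m_ge (hn : 3 ≤ n) : 4 ≤ 2^(n-1) := by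
  calc (4:ℕ) = 2^2 := rfl
  _ ≤ 2^(n-1) := Nat.pow_le_pow_right (by norm_num) (by omega)

lemma two_m (hn : 3 ≤ n) : 2^n = 2 * 2^(n-1) := by
  rw [← pow_succ']
  congr 1
  omega

lemma N_ge (hn : 3 ≤ n) : 8 ≤ 2^n := by
  calc (8:ℕ) = 2^3 := rfl
  _ ≤ 2^n := Nat.pow_le_pow_right (by norm_num) hn

lemma adj_iff (hn : 3 ≤ n) (u v : Fin (2^n)) :
    (Gamma n).Adj u v ↔ u ≠ v ∧
      ((u.val < 2^(n-1) ∧ v.val < 2^(n-1)) ∨ u.val = 0 ∨ v.val = 0) := by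
  rw [Gamma, SimpleGraph.fromRel_adj]
  tauto

lemma val_zero' (hn : 3 ≤ n) : ((0 : Fin (2^n))).val = 0 := rfl

lemma adj_zero (hn : 3 ≤ n) (u : Fin (2^n)) (h : u ≠ 0) : (Gamma n).Adj u 0 := by
  rw [adj_iff hn]
  exact ⟨h, Or.inr (Or.inr rfl)⟩

lemma reach_zero (hn : 3 ≤ n) (u : Fin (2^n)) : (Gamma n).Reachable u 0 := by
  by_cases h : u = 0
  · exact h ▸ SimpleGraph.Reachable.refl _
  · exact (adj_zero hn u h).reachable

lemma reachable (hn : 3 ≤ n) (u v : Fin (2^n)) : (Gamma n).Reachable u v :=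
  (reach_zero hn u).trans (reach_zero hn v).symm

lemma dist_eq_zero_iff (hn : 3 ≤ n) {u v : Fin (2^n)} :
    (Gamma n).dist u v = 0 ↔ u = v :=
  (reachable hn u v).dist_eq_zero_iff

lemma dist_nonadj (hn : 3 ≤ n) {u v : Fin (2^n)} (hne : u ≠ v)
    (h : ¬ (Gamma n).Adj u v) : (Gamma n).dist u v = 2 := by
  have hu : u ≠ 0 := by
    rintro rfl
    exact h (((adj_zero hn v (Ne.symm hne)).symm))
  have hv : v ≠ 0 := by
    rintro rfl
    exact h (adj_zero hn u hne)
  have h2 : (Gamma n).dist u v ≤ 2 :=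
    SimpleGraph.dist_le (SimpleGraph.Walk.cons (adj_zero hn u hu)
        (SimpleGraph.Walk.cons ((adj_zero hn v hv).symm) SimpleGraph.Walk.nil))
  have h0 : (Gamma n).dist u v ≠ 0 := fun h' => hne ((dist_eq_zero_iff hn).mp h')
  have h1 : (Gamma n).dist u v ≠ 1 := fun h' => h (SimpleGraph.dist_eq_one_iff_adj.mp h')
  omega

lemma dist_adj {u v : Fin (2^n)} (h : (Gamma n).Adj u v) : (Gamma n).dist u v = 1 :=
  SimpleGraph.dist_eq_one_iff_adj.mpr h

lemma fin_eq_zero_of_val {x : Fin (2^n)} (h : x.val = 0) : x = 0 :=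
  Fin.ext (by rw [h]; rfl)

lemma pP_ne_zero {x : Fin (2^n)} (h : pP n x) : x ≠ 0 :=
  fun h0 => h.1 (by rw [h0]; rfl)

lemma pH_ne_zero (hn : 3 ≤ n) {x : Fin (2^n)} (h : pH n x) : x ≠ 0 := by
  have := m_ge hn
  intro h0
  rw [h0] at h
  simp only [pH, val_zero' hn] at h
  omega

lemma cls (hn : 3 ≤ n) (x : Fin (2^n)) : x = 0 ∨ pP n x ∨ pH n x := by
  by_cases h0 : x = 0
  · exact Or.inl h0
  · by_cases hm : x.val < 2^(n-1)
    · exact Or.inr (Or.inl ⟨fun hv => h0 (fin_eq_zero_of_val hv), hm⟩)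
    · exact Or.inr (Or.inr (le_of_not_gt hm))

lemma dist_P_P (hn : 3 ≤ n) {u s : Fin (2^n)} (hu : pP n u) (hs : pP n s)
    (hne : u ≠ s) : (Gamma n).dist u s = 1 :=
  dist_adj ((adj_iff hn u s).mpr ⟨hne, Or.inl ⟨hu.2, hs.2⟩⟩)

lemma dist_P_H (hn : 3 ≤ n) {u s : Fin (2^n)} (hu : pP n u) (hs : pH n s) :
    (Gamma n).dist u s = 2 := by
  have := m_ge hn
  have hne : u ≠ s := fun h => by rw [h] at hu; exact absurd hu.2 (not_lt.mpr hs)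
  refine dist_nonadj hn hne ?_
  rw [adj_iff hn]
  rintro ⟨-, (⟨-, h2⟩ | h0 | h0)⟩
  · exact absurd h2 (not_lt.mpr hs)
  · exact hu.1 h0
  · simp only [pH] at hs; omega

lemma dist_H_P (hn : 3 ≤ n) {u s : Fin (2^n)} (hu : pH n u) (hs : pP n s) :
    (Gamma n).dist u s = 2 := by
  rw [SimpleGraph.dist_comm]; exact dist_P_H hn hs hu

lemma dist_H_H (hn : 3 ≤ n) {u s : Fin (2^n)} (hu : pH n u) (hs : pH n s)
    (hne : u ≠ s) : (Gamma n).dist u s = 2 := by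
  have := m_ge hn
  refine dist_nonadj hn hne ?_
  rw [adj_iff hn]
  simp only [pH] at hu hs
  rintro ⟨-, (⟨h1, -⟩ | h0 | h0)⟩ <;> omega

lemma dist_zero_left (hn : 3 ≤ n) {s : Fin (2^n)} (h : s ≠ 0) :
    (Gamma n).dist 0 s = 1 :=
  dist_adj ((adj_zero hn s h).symm)

lemma dist_zero_right (hn : 3 ≤ n) {u : Fin (2^n)} (h : u ≠ 0) :
    (Gamma n).dist u 0 = 1 :=
  dist_adj (adj_zero hn u h)

lemma twin_P (hn : 3 ≤ n) {u v s : Fin (2^n)} (hu : pP n u) (hv : pP n v)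
    (hsu : s ≠ u) (hsv : s ≠ v) : (Gamma n).dist u s = (Gamma n).dist v s := by
  rcases cls hn s with h0 | hP | hH
  · rw [h0, dist_zero_right hn (pP_ne_zero hu), dist_zero_right hn (pP_ne_zero hv)]
  · rw [dist_P_P hn hu hP (Ne.symm hsu), dist_P_P hn hv hP (Ne.symm hsv)]
  · rw [dist_P_H hn hu hH, dist_P_H hn hv hH]

lemma twin_H (hn : 3 ≤ n) {u v s : Fin (2^n)} (hu : pH n u) (hv : pH n v)
    (hsu : s ≠ u) (hsv : s ≠ v) : (Gamma n).dist u s = (Gamma n).dist v s := by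
  rcases cls hn s with h0 | hP | hH
  · rw [h0, dist_zero_right hn (pH_ne_zero hn hu), dist_zero_right hn (pH_ne_zero hn hv)]
  · rw [dist_H_P hn hu hP, dist_H_P hn hv hP]
  · rw [dist_H_H hn hu hH (Ne.symm hsu), dist_H_H hn hv hH (Ne.symm hsv)]

lemma exists_P (hn : 3 ≤ n) {S : Finset (Fin (2^n))}
    (hQ : ∀ u ∉ S, ∀ v ∉ S, pP n u → pP n v → u = v) (u : Fin (2^n)) :
    ∃ s ∈ S, pP n s ∧ s ≠ u := by
  have h4 := m_ge hn
  have hN := N_ge hn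
  set e1 : Fin (2^n) := ⟨1, by omega⟩ with he1
  set e2 : Fin (2^n) := ⟨2, by omega⟩ with he2
  set e3 : Fin (2^n) := ⟨3, by omega⟩ with he3
  have p1 : pP n e1 := ⟨by simp [he1], by simp [he1]; omega⟩
  have p2 : pP n e2 := ⟨by simp [he2], by simp [he2]; omega⟩
  have p3 : pP n e3 := ⟨by simp [he3], by simp [he3]; omega⟩
  have ne12 : e1 ≠ e2 := by simp [he1, he2, Fin.ext_iff]
  have ne13 : e1 ≠ e3 := by simp [he1, he3, Fin.ext_iff]
  have ne23 : e2 ≠ e3 := by simp [he2, he3, Fin.ext_iff]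
  have pick : ∀ a b : Fin (2^n), a ∈ S → b ∈ S → a ≠ b → pP n a → pP n b →
      ∃ s ∈ S, pP n s ∧ s ≠ u := by
    intro a b ha hb hab hpa hpb
    by_cases h : a = u
    · exact ⟨b, hb, hpb, fun hbu => hab (h.trans hbu.symm)⟩
    · exact ⟨a, ha, hpa, h⟩
  by_cases h1 : e1 ∈ S <;> by_cases h2 : e2 ∈ S
  · exact pick e1 e2 h1 h2 ne12 p1 p2
  · by_cases h3 : e3 ∈ S
    · exact pick e1 e3 h1 h3 ne13 p1 p3
    · exact absurd (hQ e2 h2 e3 h3 p2 p3) ne23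
  · by_cases h3 : e3 ∈ S
    · exact pick e2 e3 h2 h3 ne23 p2 p3
    · exact absurd (hQ e1 h1 e3 h3 p1 p3) ne13
  · exact absurd (hQ e1 h1 e2 h2 p1 p2) ne12

lemma exists_H (hn : 3 ≤ n) {S : Finset (Fin (2^n))}
    (hQ : ∀ u ∉ S, ∀ v ∉ S, pH n u → pH n v → u = v) (u : Fin (2^n)) :
    ∃ s ∈ S, pH n s ∧ s ≠ u := by
  have h4 := m_ge hn
  have hN := N_ge hn
  have h2m := two_m hn
  set e1 : Fin (2^n) := ⟨2^(n-1), by omega⟩ with he1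
  set e2 : Fin (2^n) := ⟨2^(n-1)+1, by omega⟩ with he2
  set e3 : Fin (2^n) := ⟨2^(n-1)+2, by omega⟩ with he3
  have p1 : pH n e1 := by simp [pH, he1]
  have p2 : pH n e2 := by simp [pH, he2]
  have p3 : pH n e3 := by simp [pH, he3]
  have ne12 : e1 ≠ e2 := by simp [he1, he2, Fin.ext_iff]
  have ne13 : e1 ≠ e3 := by simp [he1, he3, Fin.ext_iff]
  have ne23 : e2 ≠ e3 := by simp [he2, he3, Fin.ext_iff]
  have pick : ∀ a b : Fin (2^n), a ∈ S → b ∈ S → a ≠ b → pH n a → pH n b →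
      ∃ s ∈ S, pH n s ∧ s ≠ u := by
    intro a b ha hb hab hpa hpb
    by_cases h : a = u
    · exact ⟨b, hb, hpb, fun hbu => hab (h.trans hbu.symm)⟩
    · exact ⟨a, ha, hpa, h⟩
  by_cases h1 : e1 ∈ S <;> by_cases h2 : e2 ∈ S
  · exact pick e1 e2 h1 h2 ne12 p1 p2
  · by_cases h3 : e3 ∈ S
    · exact pick e1 e3 h1 h3 ne13 p1 p3
    · exact absurd (hQ e2 h2 e3 h3 p2 p3) ne23
  · by_cases h3 : e3 ∈ S
    · exact pick e2 e3 h2 h3 ne23 p2 p3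
    · exact absurd (hQ e1 h1 e3 h3 p1 p3) ne13
  · exact absurd (hQ e1 h1 e2 h2 p1 p2) ne12

lemma resolving_iff (hn : 3 ≤ n) (S : Finset (Fin (2^n))) :
    IsResolving (Gamma n) S ↔
      (∀ u ∉ S, ∀ v ∉ S, pP n u → pP n v → u = v) ∧
      (∀ u ∉ S, ∀ v ∉ S, pH n u → pH n v → u = v) := by
  constructor
  · intro hR
    constructor
    · intro u hu v hv hpu hpv
      exact hR u v fun s hs =>
        twin_P hn hpu hpv (fun h => hu (h ▸ hs)) (fun h => hv (h ▸ hs))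
    · intro u hu v hv hpu hpv
      exact hR u v fun s hs =>
        twin_H hn hpu hpv (fun h => hu (h ▸ hs)) (fun h => hv (h ▸ hs))
  · rintro ⟨QP, QH⟩ u v h
    by_contra hne
    have hUS : u ∉ S := by
      intro hu
      have h0 := h u hu
      rw [SimpleGraph.dist_self] at h0
      exact hne ((dist_eq_zero_iff hn).mp h0.symm).symm
    have hVS : v ∉ S := by
      intro hv
      have h0 := h v hv
      rw [SimpleGraph.dist_self] at h0
      exact hne ((dist_eq_zero_iff hn).mp h0)
    rcases cls hn u with hu | hu | hu <;> rcases cls hn v with hv | hv | hv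
    · exact hne (hu.trans hv.symm)
    · obtain ⟨s, hsS, hsH, -⟩ := exists_H hn QH u
      have hx := h s hsS
      rw [hu, dist_zero_left hn (pH_ne_zero hn hsH), dist_P_H hn hv hsH] at hx
      omega
    · obtain ⟨s, hsS, hsP, -⟩ := exists_P hn QP u
      have hx := h s hsS
      rw [hu, dist_zero_left hn (pP_ne_zero hsP), dist_H_P hn hv hsP] at hx
      omega
    · obtain ⟨s, hsS, hsH, -⟩ := exists_H hn QH u
      have hx := h s hsS
      rw [hv, dist_zero_left hn (pH_ne_zero hn hsH), dist_P_H hn hu hsH] at hx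
      omega
    · exact hne (QP u hUS v hVS hu hv)
    · obtain ⟨s, hsS, hsP, hsu⟩ := exists_P hn QP u
      have hx := h s hsS
      rw [dist_P_P hn hu hsP (Ne.symm hsu), dist_H_P hn hv hsP] at hx
      omega
    · obtain ⟨s, hsS, hsP, -⟩ := exists_P hn QP u
      have hx := h s hsS
      rw [hv, dist_zero_left hn (pP_ne_zero hsP), dist_H_P hn hu hsP] at hx
      omega
    · obtain ⟨s, hsS, hsP, hsv⟩ := exists_P hn QP v
      have hx := h s hsS
      rw [dist_P_P hn hv hsP (Ne.symm hsv), dist_H_P hn hu hsP] at hx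
      omega
    · exact hne (QH u hUS v hVS hu hv)

/-- complement condition -/
def QT (n : ℕ) (T : Finset (Fin (2^n))) : Prop :=
  (∀ u ∈ T, ∀ v ∈ T, pP n u → pP n v → u = v) ∧
  (∀ u ∈ T, ∀ v ∈ T, pH n u → pH n v → u = v)

open Classical in
lemma compl_count (hn : 3 ≤ n) {k t : ℕ} (hkt : k + t = 2^n) :
    resolvingCount n k =
      (univ.filter (fun T : Finset (Fin (2^n)) => QT n T ∧ T.card = t)).card := by
  rw [resolvingCount]
  refine Finset.card_bij' (fun S _ => Sᶜ) (fun T _ => Tᶜ) ?hi ?hj ?li ?ri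
  case hi =>
    intro S hS
    simp only [mem_filter, mem_univ, true_and] at hS ⊢
    obtain ⟨hR, hc⟩ := hS
    rw [resolving_iff hn] at hR
    refine ⟨⟨fun u hu v hv => hR.1 u (mem_compl.mp hu) v (mem_compl.mp hv),
             fun u hu v hv => hR.2 u (mem_compl.mp hu) v (mem_compl.mp hv)⟩, ?_⟩
    have h2 := Finset.card_compl_add_card S
    simp only [Fintype.card_fin] at h2
    omega
  case hj =>
    intro T hT
    simp only [mem_filter, mem_univ, true_and] at hT ⊢
    obtain ⟨hQ, hc⟩ := hT
    have h2 := Finset.card_compl_add_card T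
    simp only [Fintype.card_fin] at h2
    refine ⟨?_, ?_⟩
    · rw [resolving_iff hn]
      exact ⟨fun u hu v hv => hQ.1 u (by simpa using hu) v (by simpa using hv),
             fun u hu v hv => hQ.2 u (by simpa using hu) v (by simpa using hv)⟩
    · omega
  case li =>
    intro S _
    exact compl_compl S
  case ri =>
    intro T _
    exact compl_compl T

open Classical in
lemma count_N (hn : 3 ≤ n) : resolvingCount n (2^n) = 1 := by
  rw [compl_count hn (t := 0) (by omega)]
  have : (univ.filter (fun T : Finset (Fin (2^n)) => QT n T ∧ T.card = 0)) = {∅} := by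
    ext T
    simp only [mem_filter, mem_univ, true_and, mem_singleton, Finset.card_eq_zero]
    constructor
    · rintro ⟨-, rfl⟩
      rfl
    · rintro rfl
      exact ⟨⟨fun u hu => by simp at hu, fun u hu => by simp at hu⟩, rfl⟩
  rw [this, Finset.card_singleton]

lemma QT_of_card_le_one (hn : 3 ≤ n) {T : Finset (Fin (2^n))} (h : T.card ≤ 1) : QT n T :=
  ⟨fun u hu v hv _ _ => Finset.card_le_one.mp h u hu v hv,
   fun u hu v hv _ _ => Finset.card_le_one.mp h u hu v hv⟩

open Classical in
lemma count_N1 (hn : 3 ≤ n) : resolvingCount n (2^n - 1) = 2^n := by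
  have hN := N_ge hn
  rw [compl_count hn (t := 1) (by omega)]
  have key : ((univ : Finset (Fin (2^n)))).card
      = (univ.filter (fun T : Finset (Fin (2^n)) => QT n T ∧ T.card = 1)).card := by
    apply Finset.card_bij (fun (x : Fin (2^n)) _ => ({x} : Finset (Fin (2^n))))
    · intro a _
      simp only [mem_filter, mem_univ, true_and, Finset.card_singleton, and_true]
      exact QT_of_card_le_one hn (by simp)
    · intro a _ b _ h
      exact Finset.singleton_injective h
    · intro T hT
      simp only [mem_filter, mem_univ, true_and] at hT
      obtain ⟨x, rfl⟩ := Finset.card_eq_one.mp hT.2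
      exact ⟨x, mem_univ x, rfl⟩
  rw [← key, Finset.card_univ, Fintype.card_fin]

lemma not_pP_zero : ¬ pP n 0 := fun h => h.1 rfl

lemma not_pH_zero (hn : 3 ≤ n) : ¬ pH n 0 := by
  have := m_ge hn
  simp only [pH, val_zero' hn]
  omega

lemma not_pP_of_pH {x : Fin (2^n)} (h : pH n x) : ¬ pP n x :=
  fun hp => absurd hp.2 (not_lt.mpr h)

lemma not_pH_of_pP {x : Fin (2^n)} (h : pP n x) : ¬ pH n x :=
  fun hh => absurd h.2 (not_lt.mpr hh)

lemma ne_of_pP_pH {x y : Fin (2^n)} (hx : pP n x) (hy : pH n y) : x ≠ y :=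
  fun h => absurd hx.2 (not_lt.mpr (h ▸ hy))

open Classical in
noncomputable def Pfin (n : ℕ) : Finset (Fin (2^n)) := univ.filter (fun x => pP n x)

open Classical in
noncomputable def Hfin (n : ℕ) : Finset (Fin (2^n)) := univ.filter (fun x => pH n x)

open Classical in
lemma mem_Pfin {x : Fin (2^n)} : x ∈ Pfin n ↔ pP n x := by
  simp [Pfin]

open Classical in
lemma mem_Hfin {x : Fin (2^n)} : x ∈ Hfin n ↔ pH n x := by
  simp [Hfin]

lemma m_lt (hn : 3 ≤ n) : 2^(n-1) < 2^n := by
  have := two_m hn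
  have := m_ge hn
  omega

lemma card_Pfin (hn : 3 ≤ n) : (Pfin n).card = 2^(n-1) - 1 := by
  have hmlt := m_lt hn
  have h4 := m_ge hn
  have hEq : Pfin n = (Finset.Iio (⟨2^(n-1), hmlt⟩ : Fin (2^n))).erase 0 := by
    ext x
    simp only [mem_Pfin, Finset.mem_erase, Finset.mem_Iio, pP]
    constructor
    · rintro ⟨h0, hlt⟩
      exact ⟨fun he => h0 (by rw [he]; rfl), by rwa [Fin.lt_def]⟩
    · rintro ⟨h0, hlt⟩
      rw [Fin.lt_def] at hlt
      exact ⟨fun hv => h0 (fin_eq_zero_of_val hv), hlt⟩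
  rw [hEq, Finset.card_erase_of_mem, Fin.card_Iio]
  rw [Finset.mem_Iio, Fin.lt_def]
  show (0:ℕ) < 2^(n-1)
  omega

lemma card_Hfin (hn : 3 ≤ n) : (Hfin n).card = 2^(n-1) := by
  have hmlt := m_lt hn
  have h2m := two_m hn
  have hEq : Hfin n = Finset.Ici (⟨2^(n-1), hmlt⟩ : Fin (2^n)) := by
    ext x
    simp only [mem_Hfin, Finset.mem_Ici, pH, Fin.le_def]
  rw [hEq, Fin.card_Ici]
  show 2^n - 2^(n-1) = 2^(n-1)
  omega

open Classical in
lemma count_N3 (hn : 3 ≤ n) :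
    resolvingCount n (2^n - 3) = 2^(n-1) * (2^(n-1) - 1) := by
  have hN := N_ge hn
  have h4 := m_ge hn
  have h2m := two_m hn
  rw [compl_count hn (t := 3) (by omega)]
  have key : ((Pfin n) ×ˢ (Hfin n)).card
      = (univ.filter (fun T : Finset (Fin (2^n)) => QT n T ∧ T.card = 3)).card := by
    apply Finset.card_bij
      (fun (ph : Fin (2^n) × Fin (2^n)) _ => insert 0 ({ph.1, ph.2} : Finset (Fin (2^n))))
    · rintro ⟨p, h⟩ hmem
      rw [Finset.mem_product, mem_Pfin, mem_Hfin] at hmem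
      obtain ⟨hp, hh⟩ := hmem
      have hp0 : p ≠ 0 := pP_ne_zero hp
      have hh0 : h ≠ 0 := pH_ne_zero hn hh
      have hph : p ≠ h := ne_of_pP_pH hp hh
      simp only [mem_filter, mem_univ, true_and]
      constructor
      · constructor
        · intro u hu v hv hpu hpv
          simp only [Finset.mem_insert, Finset.mem_singleton] at hu hv
          rcases hu with rfl | rfl | rfl <;> rcases hv with rfl | rfl | rfl <;>
            first
            | rfl
            | exact absurd hpu not_pP_zero
            | exact absurd hpv not_pP_zero
            | exact absurd hpu (not_pP_of_pH hh)
            | exact absurd hpv (not_pP_of_pH hh)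
        · intro u hu v hv hpu hpv
          simp only [Finset.mem_insert, Finset.mem_singleton] at hu hv
          rcases hu with rfl | rfl | rfl <;> rcases hv with rfl | rfl | rfl <;>
            first
            | rfl
            | exact absurd hpu (not_pH_zero hn)
            | exact absurd hpv (not_pH_zero hn)
            | exact absurd hpu (not_pH_of_pP hp)
            | exact absurd hpv (not_pH_of_pP hp)
      · rw [Finset.card_insert_of_notMem (by simp [Ne.symm hp0, Ne.symm hh0]),
            Finset.card_insert_of_notMem (by simp [hph]), Finset.card_singleton]
    · rintro ⟨p, h⟩ hm1 ⟨p', h'⟩ hm2 heq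
      rw [Finset.mem_product, mem_Pfin, mem_Hfin] at hm1 hm2
      obtain ⟨hp, hh⟩ := hm1
      obtain ⟨hp', hh'⟩ := hm2
      have h1 : p ∈ insert 0 ({p', h'} : Finset (Fin (2^n))) := by
        rw [← heq]; simp
      have h2 : h ∈ insert 0 ({p', h'} : Finset (Fin (2^n))) := by
        rw [← heq]; simp
      simp only [Finset.mem_insert, Finset.mem_singleton] at h1 h2
      have hpp : p = p' := by
        rcases h1 with h | h | h
        · exact absurd h (pP_ne_zero hp)
        · exact h
        · exact absurd h (ne_of_pP_pH hp hh')
      have hhh : h = h' := by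
        rcases h2 with h1 | h1 | h1
        · exact absurd h1 (pH_ne_zero hn hh)
        · exact absurd h1.symm (ne_of_pP_pH hp' hh)
        · exact h1
      rw [Prod.ext_iff]
      exact ⟨hpp, hhh⟩
    · intro T hT
      simp only [mem_filter, mem_univ, true_and] at hT
      obtain ⟨⟨QP, QH⟩, hcard⟩ := hT
      obtain ⟨a, b, c, hab, hac, hbc, rfl⟩ := Finset.card_eq_three.mp hcard
      rcases cls hn a with ha | ha | ha <;> rcases cls hn b with hb | hb | hb <;>
        rcases cls hn c with hc | hc | hc <;>
        first
        | exact absurd (ha.trans hb.symm) hab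
        | exact absurd (ha.trans hc.symm) hac
        | exact absurd (hb.trans hc.symm) hbc
        | exact absurd (QP a (by simp) b (by simp) ha hb) hab
        | exact absurd (QP a (by simp) c (by simp) ha hc) hac
        | exact absurd (QP b (by simp) c (by simp) hb hc) hbc
        | exact absurd (QH a (by simp) b (by simp) ha hb) hab
        | exact absurd (QH a (by simp) c (by simp) ha hc) hac
        | exact absurd (QH b (by simp) c (by simp) hb hc) hbc
        | exact ⟨(b, c), by rw [Finset.mem_product, mem_Pfin, mem_Hfin]; exact ⟨hb, hc⟩,
            by subst ha; ext x; simp; try tauto⟩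
        | exact ⟨(c, b), by rw [Finset.mem_product, mem_Pfin, mem_Hfin]; exact ⟨hc, hb⟩,
            by subst ha; ext x; simp; try tauto⟩
        | exact ⟨(a, c), by rw [Finset.mem_product, mem_Pfin, mem_Hfin]; exact ⟨ha, hc⟩,
            by subst hb; ext x; simp; try tauto⟩
        | exact ⟨(c, a), by rw [Finset.mem_product, mem_Pfin, mem_Hfin]; exact ⟨hc, ha⟩,
            by subst hb; ext x; simp; try tauto⟩
        | exact ⟨(a, b), by rw [Finset.mem_product, mem_Pfin, mem_Hfin]; exact ⟨ha, hb⟩,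
            by subst hc; ext x; simp; try tauto⟩
        | exact ⟨(b, a), by rw [Finset.mem_product, mem_Pfin, mem_Hfin]; exact ⟨hb, ha⟩,
            by subst hc; ext x; simp; try tauto⟩
  rw [← key, Finset.card_product, card_Pfin hn, card_Hfin hn, Nat.mul_comm]

open Classical in
lemma count_N2 (hn : 3 ≤ n) :
    resolvingCount n (2^n - 2) = 2^(2*n-2) + 2^(n-1) - 1 := by
  have hN := N_ge hn
  have h4 := m_ge hn
  have h2m := two_m hn
  rw [compl_count hn (t := 2) (by omega)]
  have key : (((univ : Finset (Fin (2^n))).erase 0).disjSum ((Pfin n) ×ˢ (Hfin n))).card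
      = (univ.filter (fun T : Finset (Fin (2^n)) => QT n T ∧ T.card = 2)).card := by
    apply Finset.card_bij (fun z _ =>
      Sum.elim (fun (x : Fin (2^n)) => ({0, x} : Finset (Fin (2^n))))
        (fun (ph : Fin (2^n) × Fin (2^n)) => ({ph.1, ph.2} : Finset (Fin (2^n)))) z)
    · rintro (x | ⟨p, h⟩) hmem
      · rw [Finset.mem_disjSum] at hmem
        have hx : x ≠ 0 := by
          rcases hmem with ⟨a, ha, hax⟩ | ⟨a, ha, hax⟩
          · cases hax
            exact (Finset.mem_erase.mp ha).1
          · cases hax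
        simp only [Sum.elim_inl, mem_filter, mem_univ, true_and]
        refine ⟨⟨?_, ?_⟩, ?_⟩
        · intro u hu v hv hpu hpv
          simp only [Finset.mem_insert, Finset.mem_singleton] at hu hv
          rcases hu with rfl | rfl <;> rcases hv with rfl | rfl <;>
            first
            | rfl
            | exact absurd hpu not_pP_zero
            | exact absurd hpv not_pP_zero
        · intro u hu v hv hpu hpv
          simp only [Finset.mem_insert, Finset.mem_singleton] at hu hv
          rcases hu with rfl | rfl <;> rcases hv with rfl | rfl <;>
            first
            | rfl
            | exact absurd hpu (not_pH_zero hn)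
            | exact absurd hpv (not_pH_zero hn)
        · rw [Finset.card_insert_of_notMem (by simp [Ne.symm hx]), Finset.card_singleton]
      · rw [Finset.mem_disjSum] at hmem
        have hph : p ∈ Pfin n ∧ h ∈ Hfin n := by
          rcases hmem with ⟨a, ha, hax⟩ | ⟨a, ha, hax⟩
          · cases hax
          · cases hax
            exact Finset.mem_product.mp ha
        rw [mem_Pfin] at hph
        rw [mem_Hfin] at hph
        obtain ⟨hp, hh⟩ := hph
        have hpne : p ≠ h := ne_of_pP_pH hp hh
        simp only [Sum.elim_inr, mem_filter, mem_univ, true_and]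
        refine ⟨⟨?_, ?_⟩, ?_⟩
        · intro u hu v hv hpu hpv
          simp only [Finset.mem_insert, Finset.mem_singleton] at hu hv
          rcases hu with rfl | rfl <;> rcases hv with rfl | rfl <;>
            first
            | rfl
            | exact absurd hpu (not_pP_of_pH hh)
            | exact absurd hpv (not_pP_of_pH hh)
        · intro u hu v hv hpu hpv
          simp only [Finset.mem_insert, Finset.mem_singleton] at hu hv
          rcases hu with rfl | rfl <;> rcases hv with rfl | rfl <;>
            first
            | rfl
            | exact absurd hpu (not_pH_of_pP hp)
            | exact absurd hpv (not_pH_of_pP hp)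
        · rw [Finset.card_insert_of_notMem (by simp [hpne]), Finset.card_singleton]
    · rintro (x | ⟨p, h⟩) hm1 (y | ⟨p', h'⟩) hm2 heq
      · rw [Finset.mem_disjSum] at hm1 hm2
        have hx : x ≠ 0 := by
          rcases hm1 with ⟨a, ha, hax⟩ | ⟨a, ha, hax⟩
          · cases hax; exact (Finset.mem_erase.mp ha).1
          · cases hax
        simp only [Sum.elim_inl] at heq
        have : x ∈ ({0, y} : Finset (Fin (2^n))) := by
          rw [← heq]; simp
        simp only [Finset.mem_insert, Finset.mem_singleton] at this
        rcases this with h | h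
        · exact absurd h hx
        · rw [h]
      · -- inl x vs inr (p', h') : impossible
        exfalso
        rw [Finset.mem_disjSum] at hm2
        have hph : p' ∈ Pfin n ∧ h' ∈ Hfin n := by
          rcases hm2 with ⟨a, ha, hax⟩ | ⟨a, ha, hax⟩
          · cases hax
          · cases hax; exact Finset.mem_product.mp ha
        rw [mem_Pfin] at hph
        rw [mem_Hfin] at hph
        simp only [Sum.elim_inl, Sum.elim_inr] at heq
        have h0 : (0 : Fin (2^n)) ∈ ({p', h'} : Finset (Fin (2^n))) := by
          rw [← heq]; simp
        simp only [Finset.mem_insert, Finset.mem_singleton] at h0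
        rcases h0 with h0 | h0
        · exact pP_ne_zero hph.1 h0.symm
        · exact pH_ne_zero hn hph.2 h0.symm
      · -- inr vs inl : impossible
        exfalso
        rw [Finset.mem_disjSum] at hm1
        have hph : p ∈ Pfin n ∧ h ∈ Hfin n := by
          rcases hm1 with ⟨a, ha, hax⟩ | ⟨a, ha, hax⟩
          · cases hax
          · cases hax; exact Finset.mem_product.mp ha
        rw [mem_Pfin] at hph
        rw [mem_Hfin] at hph
        simp only [Sum.elim_inl, Sum.elim_inr] at heq
        have h0 : (0 : Fin (2^n)) ∈ ({p, h} : Finset (Fin (2^n))) := by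
          rw [heq]; simp
        simp only [Finset.mem_insert, Finset.mem_singleton] at h0
        rcases h0 with h0 | h0
        · exact pP_ne_zero hph.1 h0.symm
        · exact pH_ne_zero hn hph.2 h0.symm
      · rw [Finset.mem_disjSum] at hm1 hm2
        have hph : p ∈ Pfin n ∧ h ∈ Hfin n := by
          rcases hm1 with ⟨a, ha, hax⟩ | ⟨a, ha, hax⟩
          · cases hax
          · cases hax; exact Finset.mem_product.mp ha
        have hph' : p' ∈ Pfin n ∧ h' ∈ Hfin n := by
          rcases hm2 with ⟨a, ha, hax⟩ | ⟨a, ha, hax⟩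
          · cases hax
          · cases hax; exact Finset.mem_product.mp ha
        rw [mem_Pfin] at hph hph'
        rw [mem_Hfin] at hph hph'
        obtain ⟨hp, hh⟩ := hph
        obtain ⟨hp', hh'⟩ := hph'
        simp only [Sum.elim_inr] at heq
        have h1 : p ∈ ({p', h'} : Finset (Fin (2^n))) := by rw [← heq]; simp
        have h2 : h ∈ ({p', h'} : Finset (Fin (2^n))) := by rw [← heq]; simp
        simp only [Finset.mem_insert, Finset.mem_singleton] at h1 h2
        have hpp : p = p' := by
          rcases h1 with h1 | h1
          · exact h1
          · exact absurd h1 (ne_of_pP_pH hp hh')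
        have hhh : h = h' := by
          rcases h2 with h2 | h2
          · exact absurd h2.symm (ne_of_pP_pH hp' hh)
          · exact h2
        rw [hpp, hhh]
    · intro T hT
      simp only [mem_filter, mem_univ, true_and] at hT
      obtain ⟨⟨QP, QH⟩, hcard⟩ := hT
      obtain ⟨a, b, hab, rfl⟩ := Finset.card_eq_two.mp hcard
      have memL : ∀ x : Fin (2^n), x ≠ 0 →
          Sum.inl x ∈ (((univ : Finset (Fin (2^n))).erase 0).disjSum ((Pfin n) ×ˢ (Hfin n))) := by
        intro x hx
        rw [Finset.mem_disjSum]
        exact Or.inl ⟨x, Finset.mem_erase.mpr ⟨hx, mem_univ x⟩, rfl⟩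
      have memR : ∀ p h : Fin (2^n), pP n p → pH n h →
          Sum.inr (p, h) ∈ (((univ : Finset (Fin (2^n))).erase 0).disjSum ((Pfin n) ×ˢ (Hfin n))) := by
        intro p h hp hh
        rw [Finset.mem_disjSum]
        exact Or.inr ⟨(p, h), Finset.mem_product.mpr ⟨mem_Pfin.mpr hp, mem_Hfin.mpr hh⟩, rfl⟩
      rcases cls hn a with ha | ha | ha <;> rcases cls hn b with hb | hb | hb <;>
        first
        | exact absurd (ha.trans hb.symm) hab
        | exact absurd (QP a (by simp) b (by simp) ha hb) hab
        | exact absurd (QH a (by simp) b (by simp) ha hb) hab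
        | exact ⟨Sum.inl b, memL b (fun h0 => hab (ha.trans h0.symm)),
            by subst ha; ext x; simp; try tauto⟩
        | exact ⟨Sum.inl a, memL a (fun h0 => hab (h0.trans hb.symm)),
            by subst hb; ext x; simp; try tauto⟩
        | exact ⟨Sum.inr (a, b), memR a b ha hb, by ext x; simp; try tauto⟩
        | exact ⟨Sum.inr (b, a), memR b a hb ha, by ext x; simp; try tauto⟩
  rw [← key, Finset.card_disjSum, Finset.card_product, card_Pfin hn, card_Hfin hn,
      Finset.card_erase_of_mem (mem_univ 0), Finset.card_univ, Fintype.card_fin]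
  have hsq : 2^(2*n-2) = 2^(n-1) * 2^(n-1) := by
    rw [← pow_add]
    congr 1
    omega
  rw [hsq]
  have hsub : (2^(n-1) - 1) * 2^(n-1) = 2^(n-1) * 2^(n-1) - 2^(n-1) := by
    rw [Nat.sub_mul, one_mul]
  rw [hsub]
  have hMM : 2^(n-1) ≤ 2^(n-1) * 2^(n-1) := Nat.le_mul_of_pos_left _ (by omega)
  omega

end Stmt12Aux

/-- For every n ≥ 3: Γ_n has exactly 2^(n-1)(2^(n-1)−1) resolving sets of cardinality
2^n−3, exactly 2^(2n-2)+2^(n-1)−1 of cardinality 2^n−2, exactly 2^n of cardinality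
2^n−1, exactly 1 of cardinality 2^n, and its resolving polynomial is
x^(2^n) + 2^n x^(2^n−1) + (2^(2n-2)+2^(n-1)−1) x^(2^n−2) + (2^(2n-2)−2^(n-1)) x^(2^n−3). -/
theorem stmt_12 (n : ℕ) (hn : 3 ≤ n) :
    resolvingCount n (2 ^ n - 3) = 2 ^ (n - 1) * (2 ^ (n - 1) - 1) ∧
    resolvingCount n (2 ^ n - 2) = 2 ^ (2 * n - 2) + 2 ^ (n - 1) - 1 ∧
    resolvingCount n (2 ^ n - 1) = 2 ^ n ∧
    resolvingCount n (2 ^ n) = 1 ∧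
    (∑ k ∈ Finset.Icc (2 ^ n - 3) (2 ^ n),
        C ((resolvingCount n k : ℤ)) * X ^ k)
      = X ^ (2 ^ n) + C ((2 : ℤ) ^ n) * X ^ (2 ^ n - 1)
        + C ((2 : ℤ) ^ (2 * n - 2) + 2 ^ (n - 1) - 1) * X ^ (2 ^ n - 2)
        + C ((2 : ℤ) ^ (2 * n - 2) - 2 ^ (n - 1)) * X ^ (2 ^ n - 3) := by
  have h3 := Stmt12Aux.count_N3 hn
  have h2 := Stmt12Aux.count_N2 hn
  have h1 := Stmt12Aux.count_N1 hn
  have h0 := Stmt12Aux.count_N hn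
  have hN := Stmt12Aux.N_ge hn
  have h4 := Stmt12Aux.m_ge hn
  refine ⟨h3, h2, h1, h0, ?_⟩
  have hIcc : Finset.Icc (2^n - 3) (2^n) = {2^n - 3, 2^n - 2, 2^n - 1, 2^n} := by
    ext x
    simp only [Finset.mem_Icc, Finset.mem_insert, Finset.mem_singleton]
    omega
  rw [hIcc]
  rw [Finset.sum_insert (by simp; omega), Finset.sum_insert (by simp; omega),
      Finset.sum_insert (by simp; omega), Finset.sum_singleton]
  rw [h3, h2, h1, h0]
  have hsq : (2:ℤ)^(2*n-2) = 2^(n-1) * 2^(n-1) := by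
    rw [← pow_add]
    congr 1
    omega
  have e3 : ((2 ^ (n - 1) * (2 ^ (n - 1) - 1) : ℕ) : ℤ)
      = (2 : ℤ) ^ (2 * n - 2) - 2 ^ (n - 1) := by
    rw [Nat.cast_mul, Nat.cast_sub (by omega : (1:ℕ) ≤ 2^(n-1)), hsq]
    push_cast
    ring
  have e2 : ((2 ^ (2 * n - 2) + 2 ^ (n - 1) - 1 : ℕ) : ℤ)
      = (2 : ℤ) ^ (2 * n - 2) + 2 ^ (n - 1) - 1 := by
    rw [Nat.cast_sub (by have : (0:ℕ) < 2^(2*n-2) := Nat.pow_pos (by norm_num); omega : (1:ℕ) ≤ 2^(2*n-2) + 2^(n-1))]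
    push_cast
    ring
  have e1 : ((2 ^ n : ℕ) : ℤ) = (2 : ℤ) ^ n := by push_cast; ring
  have e0 : ((1 : ℕ) : ℤ) = 1 := Nat.cast_one
  rw [e3, e2, e1, e0, map_one, one_mul]
  ring
end

section
/- For every integer n ≥ 3, the characteristic polynomial of the adjacency matrix of Γ_n equals x^{2^{n-1}−1} (x+1)^{2^{n-1}−2} · ( x^3 + (2 − 2^{n-1}) x^2 + (1 − 2^n) x + (2^{2n-2} − 2^n) ). -/
open Polynomial

noncomputable instance (n : ℕ) : DecidableRel (Gamma n).Adj := Classical.decRel _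

namespace Stmt13Aux

open Matrix

variable {K : Type} [Field K]

def pv (m : ℕ) {N : ℕ} (i : Fin N) : K := if i.val < m then 1 else 0
def ev {N : ℕ} (i : Fin N) : K := if i.val = 0 then 1 else 0
def hvv (m : ℕ) {N : ℕ} (i : Fin N) : K := if i.val < m then 0 else 1
def dv (m : ℕ) {N : ℕ} (x : K) (i : Fin N) : K := if i.val < m then x + 1 else x

def Umat (m : ℕ) {N : ℕ} : Matrix (Fin N) (Fin 3) K :=
  Matrix.of fun i k => ![pv m i, ev i, hvv m i] k

def Wmat (m : ℕ) {N : ℕ} : Matrix (Fin 3) (Fin N) K :=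
  Matrix.of fun k j => ![pv m j, hvv m j, ev j] k

lemma card_lt (N m : ℕ) (h : m ≤ N) :
    (Finset.univ.filter fun i : Fin N => i.val < m).card = m := by
  rw [Finset.card_filter]
  rw [Fin.sum_univ_eq_sum_range (fun i => if i < m then 1 else 0)]
  rw [← Finset.card_filter]
  have : Finset.filter (fun i => i < m) (Finset.range N) = Finset.range m := by
    ext x; simp; omega
  rw [this, Finset.card_range]

lemma card_ge (N m : ℕ) (h : m ≤ N) :
    (Finset.univ.filter fun i : Fin N => ¬ i.val < m).card = N - m := by
  have h2 := Finset.card_filter_add_card_filter_not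
    (s := (Finset.univ : Finset (Fin N))) (p := fun i : Fin N => i.val < m)
  rw [card_lt N m h] at h2
  simp only [Finset.card_univ, Fintype.card_fin] at h2
  omega

lemma sum_lt (N m : ℕ) (h : m ≤ N) (c : K) :
    ∑ i : Fin N, (if i.val < m then c else 0) = m * c := by
  rw [← Finset.sum_filter, Finset.sum_const, card_lt N m h, nsmul_eq_mul]

lemma sum_ge (N m : ℕ) (h : m ≤ N) (c : K) :
    ∑ i : Fin N, (if i.val < m then 0 else c) = (N - m : ℕ) * c := by
  have : ∀ i : Fin N, (if i.val < m then (0:K) else c) = (if ¬ i.val < m then c else 0) := by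
    intro i; by_cases hi : i.val < m <;> simp [hi]
  simp_rw [this]
  rw [← Finset.sum_filter, Finset.sum_const, card_ge N m h, nsmul_eq_mul]

lemma sum_zerov (N : ℕ) (hN : 0 < N) (c : K) :
    ∑ i : Fin N, (if i.val = 0 then c else 0) = c := by
  have : ∀ i : Fin N, (if i.val = 0 then c else 0) = (if i = ⟨0, hN⟩ then c else 0) := by
    intro i; by_cases hi : i.val = 0
    · rw [if_pos hi, if_pos (Fin.ext hi)]
    · rw [if_neg hi, if_neg (fun h => hi (by rw [h]))]
  simp_rw [this]
  rw [Finset.sum_ite_eq' Finset.univ (⟨0,hN⟩ : Fin N) (fun _ => c), if_pos (Finset.mem_univ _)]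

lemma prod_dv (N m : ℕ) (h : m ≤ N) (x : K) :
    ∏ i : Fin N, dv m x i = (x + 1) ^ m * x ^ (N - m) := by
  unfold dv
  rw [Finset.prod_ite, Finset.prod_const, Finset.prod_const, card_lt N m h, card_ge N m h]

lemma det_key (N m : ℕ) (hm : 2 ≤ m) (hN : N = m + m) (x : K)
    (hx : x ≠ 0) (hx1 : x + 1 ≠ 0) :
    (Matrix.diagonal (dv m x) - (Umat m : Matrix (Fin N) (Fin 3) K) * (Wmat m : Matrix (Fin 3) (Fin N) K) : Matrix (Fin N) (Fin N) K).det
      = x ^ (m - 1) * (x + 1) ^ (m - 2) *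
        (x ^ 3 + (2 - (m : K)) * x ^ 2 + (1 - 2 * (m : K)) * x + ((m : K) ^ 2 - 2 * (m : K))) := by
  have hmN : m ≤ N := by omega
  have hN0 : 0 < N := by omega
  have h0m : 0 < m := by omega
  set a : K := (x + 1)⁻¹ with ha
  set b : K := x⁻¹ with hb
  have hd : ∀ i : Fin N, dv m x i ≠ 0 := by
    intro i; unfold dv; split <;> assumption
  set Dinv : Matrix (Fin N) (Fin N) K := Matrix.diagonal (fun i => (dv m x i)⁻¹) with hDinv
  have hDDinv : Matrix.diagonal (dv m x) * Dinv = 1 := by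
    rw [hDinv, Matrix.diagonal_mul_diagonal]
    have : (fun i => dv m x i * (dv m x i)⁻¹) = fun _ : Fin N => (1:K) := by
      funext i; exact mul_inv_cancel₀ (hd i)
    rw [this, Matrix.diagonal_one]
  have key : (Matrix.diagonal (dv m x) - (Umat m : Matrix (Fin N) (Fin 3) K) * (Wmat m : Matrix (Fin 3) (Fin N) K) : Matrix (Fin N) (Fin N) K)
      = (Matrix.diagonal (dv m x) : Matrix (Fin N) (Fin N) K) * (1 - Dinv * (Umat m : Matrix (Fin N) (Fin 3) K) * (Wmat m : Matrix (Fin 3) (Fin N) K)) := by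
    rw [Matrix.mul_sub, Matrix.mul_one, ← Matrix.mul_assoc, ← Matrix.mul_assoc, hDDinv,
      Matrix.one_mul]
  have hdinv_lt : ∀ i : Fin N, i.val < m → (dv m x i)⁻¹ = a := by
    intro i hi; unfold dv; rw [if_pos hi]
  have hdinv_ge : ∀ i : Fin N, ¬ i.val < m → (dv m x i)⁻¹ = b := by
    intro i hi; unfold dv; rw [if_neg hi]
  set T : Matrix (Fin 3) (Fin 3) K :=
    (Wmat m : Matrix (Fin 3) (Fin N) K) * (Dinv * (Umat m : Matrix (Fin N) (Fin 3) K)) with hTdef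
  have hdm : ∀ (i : Fin N) (l : Fin 3), (Dinv * (Umat m : Matrix (Fin N) (Fin 3) K)) i l
      = (dv m x i)⁻¹ * Umat m i l := by
    intro i l; rw [hDinv, Matrix.diagonal_mul]
  have h00 : T 0 0 = (m:K) * a := by
    rw [hTdef, Matrix.mul_apply]
    trans (∑ i : Fin N, if (i : Fin N).val < m then a else 0)
    · refine Finset.sum_congr rfl fun i _ => ?_
      rw [hdm]
      by_cases hi : i.val < m
      · simp [Wmat, Umat, pv, hi, hdinv_lt i hi]
      · simp [Wmat, Umat, pv, hi]
    · exact sum_lt N m hmN a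
  have h01 : T 0 1 = a := by
    rw [hTdef, Matrix.mul_apply]
    trans (∑ i : Fin N, if (i : Fin N).val = 0 then a else 0)
    · refine Finset.sum_congr rfl fun i _ => ?_
      rw [hdm]
      by_cases h0 : i.val = 0
      · have hi : i.val < m := by omega
        simp [Wmat, Umat, pv, ev, h0, hi, hdinv_lt i hi, show m ≠ 0 from by omega]
      · simp [Wmat, Umat, ev, h0]
    · exact sum_zerov N hN0 a
  have h02 : T 0 2 = 0 := by
    rw [hTdef, Matrix.mul_apply]
    trans (∑ _i : Fin N, (0:K))
    · refine Finset.sum_congr rfl fun i _ => ?_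
      rw [hdm]
      by_cases hi : i.val < m
      · simp [Wmat, Umat, pv, hvv, hi]
      · simp [Wmat, Umat, pv, hvv, hi]
    · exact Finset.sum_const_zero
  have h10 : T 1 0 = 0 := by
    rw [hTdef, Matrix.mul_apply]
    trans (∑ _i : Fin N, (0:K))
    · refine Finset.sum_congr rfl fun i _ => ?_
      rw [hdm]
      by_cases hi : i.val < m
      · simp [Wmat, Umat, pv, hvv, hi]
      · simp [Wmat, Umat, pv, hvv, hi]
    · exact Finset.sum_const_zero
  have h11 : T 1 1 = 0 := by
    rw [hTdef, Matrix.mul_apply]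
    trans (∑ _i : Fin N, (0:K))
    · refine Finset.sum_congr rfl fun i _ => ?_
      rw [hdm]
      by_cases h0 : i.val = 0
      · have hi : i.val < m := by omega
        simp [Wmat, Umat, ev, hvv, h0, hi, show m ≠ 0 from by omega]
      · simp [Wmat, Umat, ev, hvv, h0]
    · exact Finset.sum_const_zero
  have h12 : T 1 2 = (m:K) * b := by
    rw [hTdef, Matrix.mul_apply]
    trans (∑ i : Fin N, if (i : Fin N).val < m then 0 else b)
    · refine Finset.sum_congr rfl fun i _ => ?_
      rw [hdm]
      by_cases hi : i.val < m
      · simp [Wmat, Umat, hvv, hi]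
      · simp [Wmat, Umat, hvv, hi, hdinv_ge i hi]
    · rw [sum_ge N m hmN b, show N - m = m from by omega]
  have h20 : T 2 0 = a := by
    rw [hTdef, Matrix.mul_apply]
    trans (∑ i : Fin N, if (i : Fin N).val = 0 then a else 0)
    · refine Finset.sum_congr rfl fun i _ => ?_
      rw [hdm]
      by_cases h0 : i.val = 0
      · have hi : i.val < m := by omega
        simp [Wmat, Umat, pv, ev, h0, hi, hdinv_lt i hi, show m ≠ 0 from by omega]
      · simp [Wmat, Umat, ev, h0]
    · exact sum_zerov N hN0 a
  have h21 : T 2 1 = a := by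
    rw [hTdef, Matrix.mul_apply]
    trans (∑ i : Fin N, if (i : Fin N).val = 0 then a else 0)
    · refine Finset.sum_congr rfl fun i _ => ?_
      rw [hdm]
      by_cases h0 : i.val = 0
      · have hi : i.val < m := by omega
        simp [Wmat, Umat, ev, h0, hi, hdinv_lt i hi, show m ≠ 0 from by omega]
      · simp [Wmat, Umat, ev, h0]
    · exact sum_zerov N hN0 a
  have h22 : T 2 2 = 0 := by
    rw [hTdef, Matrix.mul_apply]
    trans (∑ _i : Fin N, (0:K))
    · refine Finset.sum_congr rfl fun i _ => ?_
      rw [hdm]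
      by_cases h0 : i.val = 0
      · have hi : i.val < m := by omega
        simp [Wmat, Umat, ev, hvv, h0, hi, show m ≠ 0 from by omega]
      · simp [Wmat, Umat, ev, hvv, h0]
    · exact Finset.sum_const_zero
  rw [key, Matrix.det_mul, Matrix.det_diagonal, prod_dv N m hmN x,
    show N - m = m from by omega, Matrix.det_one_sub_mul_comm, ← hTdef]
  have hE : (1 - T : Matrix (Fin 3) (Fin 3) K)
      = Matrix.of ![![1-(m:K)*a, -a, 0], ![0, 1, -((m:K)*b)], ![-a, -a, 1]] := by
    ext k l
    fin_cases k <;> fin_cases l <;>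
      simp [Matrix.one_apply, h00, h01, h02, h10, h11, h12, h20, h21, h22]
  have hdet3 : Matrix.det (1 - T : Matrix (Fin 3) (Fin 3) K)
      = 1 - (m:K)*a*b - (m:K)*a + (m:K)^2*a^2*b - (m:K)*a^2*b := by
    rw [hE, Matrix.det_fin_three]
    simp only [Matrix.of_apply, Matrix.cons_val', Matrix.cons_val_zero, Matrix.cons_val_one,
      Matrix.head_cons, Matrix.head_fin_const, Matrix.cons_val_two, Matrix.tail_cons,
      Matrix.empty_val', Matrix.cons_val_fin_one, Matrix.head_val']
    ring
  rw [hdet3]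
  have hp1 : (x+1)^(m-2) * (x+1)^2 = (x+1)^m := by
    rw [← pow_add, Nat.sub_add_cancel hm]
  have hp2 : x^(m-1) * x = x^m := by
    rw [← pow_succ, Nat.sub_add_cancel (by omega : 1 ≤ m)]
  rw [← hp1, ← hp2]
  have hmain : (x+1)^2 * (x * (1 - (m:K)*a*b - (m:K)*a + (m:K)^2*a^2*b - (m:K)*a^2*b))
      = x ^ 3 + (2 - (m : K)) * x ^ 2 + (1 - 2 * (m : K)) * x + ((m : K) ^ 2 - 2 * (m : K)) := by
    rw [ha, hb]
    have hu : (x+1) * (x+1)⁻¹ = 1 := mul_inv_cancel₀ hx1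
    have hv : x * x⁻¹ = 1 := mul_inv_cancel₀ hx
    linear_combination
      (-((m:K))*(x+1)*(x*x⁻¹) - (m:K)*x*(x+1) + ((m:K)^2 - (m:K))*((x+1)*(x+1)⁻¹ + 1)) * hu
      + (-((m:K))*(x+1) + ((m:K)^2 - (m:K))*((x+1)*(x+1)⁻¹)^2) * hv
  linear_combination ((x+1)^(m-2) * x^(m-1)) * hmain

abbrev KK : Type := FractionRing (Polynomial ℚ)

noncomputable def phi : Polynomial ℤ →+* KK :=
  (algebraMap (Polynomial ℚ) (FractionRing (Polynomial ℚ))).comp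
    (Polynomial.mapRingHom (Int.castRingHom ℚ))

lemma phi_inj : Function.Injective phi := by
  have h1 : Function.Injective (algebraMap (Polynomial ℚ) (FractionRing (Polynomial ℚ))) :=
    IsFractionRing.injective _ _
  have h2 : Function.Injective (Polynomial.mapRingHom (Int.castRingHom ℚ)) :=
    Polynomial.map_injective _ Int.cast_injective
  exact h1.comp h2

lemma phi_C (z : ℤ) : phi (Polynomial.C z) = (z : KK) := by
  rw [← map_intCast phi z]
  norm_cast

lemma phi_X_ne : phi Polynomial.X ≠ 0 := by
  intro h
  have := phi_inj (h.trans (map_zero phi).symm)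
  exact Polynomial.X_ne_zero this

lemma phi_X_add_one_ne : phi Polynomial.X + 1 ≠ 0 := by
  intro h
  have h1 : phi (Polynomial.X + 1) = phi 0 := by
    rw [_root_.map_add, _root_.map_one, map_zero, h]
  have h2 := phi_inj h1
  have : ((Polynomial.X + 1 : Polynomial ℤ).eval 0) = 0 := by rw [h2]; simp
  simp at this

end Stmt13Aux

open Stmt13Aux

/-- For every n ≥ 3, the characteristic polynomial of the adjacency matrix of Γ_n is
x^(2^(n-1)−1) (x+1)^(2^(n-1)−2) (x³ + (2−2^(n-1))x² + (1−2^n)x + (2^(2n-2)−2^n)). -/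
theorem stmt_13 (n : ℕ) (hn : 3 ≤ n) :
    ((Gamma n).adjMatrix ℤ).charpoly
      = X ^ (2 ^ (n - 1) - 1) * (X + 1) ^ (2 ^ (n - 1) - 2) *
        (X ^ 3 + C ((2 : ℤ) - 2 ^ (n - 1)) * X ^ 2 + C ((1 : ℤ) - 2 ^ n) * X
          + C ((2 : ℤ) ^ (2 * n - 2) - 2 ^ n)) := by
  classical
  set m := 2 ^ (n - 1) with hmdef
  have hm : 2 ≤ m := by
    have : (2:ℕ)^1 ≤ 2^(n-1) := Nat.pow_le_pow_right (by norm_num) (by omega)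
    simpa using this
  have hN : 2 ^ n = m + m := by
    rw [show n = n-1+1 from by omega, pow_succ]
    omega
  apply phi_inj
  rw [Matrix.charpoly, RingHom.map_det, RingHom.mapMatrix_apply]
  have hx := phi_X_ne
  have hx1 := phi_X_add_one_ne
  have hmat : (Matrix.charmatrix ((Gamma n).adjMatrix ℤ)).map phi
      = (Matrix.diagonal (dv m (phi X)) - (Umat m : Matrix (Fin (2^n)) (Fin 3) KK) * (Wmat m : Matrix (Fin 3) (Fin (2^n)) KK) :
          Matrix (Fin (2^n)) (Fin (2^n)) KK) := by
    ext i j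
    rw [Matrix.map_apply]
    by_cases hij : i = j
    · subst hij
      rw [Matrix.charmatrix_apply_eq]
      have hA : (Gamma n).adjMatrix ℤ i i = 0 := by simp
      rw [hA, map_sub, map_zero, Matrix.sub_apply, Matrix.diagonal_apply_eq,
        Matrix.mul_apply, Fin.sum_univ_three]
      by_cases hi : i.val < m
      · simp [Umat, Wmat, pv, ev, hvv, dv, hi]
      · have hi0 : ¬ i.val = 0 := by omega
        simp [Umat, Wmat, pv, ev, hvv, dv, hi, hi0, show ¬ i = 0 from fun h => hi0 (by simp [h])]
    · rw [Matrix.charmatrix_apply_ne _ _ _ hij, map_neg,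
        Matrix.sub_apply, Matrix.diagonal_apply_ne _ hij, Matrix.mul_apply,
        Fin.sum_univ_three, SimpleGraph.adjMatrix_apply, zero_sub]
      have hcast : phi (C (if (Gamma n).Adj i j then (1:ℤ) else 0))
          = (if (Gamma n).Adj i j then (1:KK) else 0) := by
        split <;> simp [phi_C]
      rw [hcast]
      congr 1
      have hadj : (Gamma n).Adj i j ↔ ((i.val < m ∧ j.val < m) ∨ i.val = 0 ∨ j.val = 0) := by
        rw [Gamma, SimpleGraph.fromRel_adj]
        constructor
        · rintro ⟨-, h | h⟩ <;> tauto
        · intro h; exact ⟨hij, Or.inl h⟩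
      simp only [hadj]
      by_cases hi0 : i.val = 0
      · have hi : i.val < m := by omega
        by_cases hj : j.val < m
        · have hj0 : ¬ j.val = 0 := fun h => hij (Fin.ext (by omega))
          simp [Umat, Wmat, pv, ev, hvv, hi, hj, hi0, hj0, show i = 0 from Fin.ext (by simp [hi0]), show ¬ j = 0 from fun h => hj0 (by simp [h]), show 0 < m from by omega]
        · have hj0 : ¬ j.val = 0 := by omega
          simp [Umat, Wmat, pv, ev, hvv, hi, hj, hi0, hj0, show i = 0 from Fin.ext (by simp [hi0]), show ¬ j = 0 from fun h => hj0 (by simp [h]), show 0 < m from by omega]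
      · by_cases hj0 : j.val = 0
        · have hj : j.val < m := by omega
          by_cases hi : i.val < m <;> simp [Umat, Wmat, pv, ev, hvv, hi, hj, hi0, hj0, show ¬ i = 0 from fun h => hi0 (by simp [h]), show j = 0 from Fin.ext (by simp [hj0]), show 0 < m from by omega]
        · by_cases hi : i.val < m <;> by_cases hj : j.val < m <;>
            simp [Umat, Wmat, pv, ev, hvv, hi, hj, hi0, hj0, show ¬ i = 0 from fun h => hi0 (by simp [h]), show ¬ j = 0 from fun h => hj0 (by simp [h]), show 0 < m from by omega]
  rw [hmat, det_key (2^n) m hm hN (phi X) hx hx1]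
  simp only [_root_.map_mul, map_pow, _root_.map_add, _root_.map_one, phi_C]
  have hmK : ((m:ℤ) : KK) = (m : KK) := by push_cast; ring
  have hc1 : ((2 - 2^(n-1) : ℤ) : KK) = 2 - (m : KK) := by
    rw [hmdef]; push_cast; ring
  have hc2 : ((1 - 2^n : ℤ) : KK) = 1 - 2 * (m : KK) := by
    have : (2:ℤ)^n = 2 * 2^(n-1) := by
      conv_lhs => rw [show n = n-1+1 from by omega, pow_succ]
      ring
    rw [this, hmdef]; push_cast; ring
  have hc3 : (((2:ℤ)^(2*n-2) - 2^n : ℤ) : KK) = (m : KK)^2 - 2 * (m : KK) := by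
    have h1 : (2:ℤ)^(2*n-2) = (2^(n-1))^2 := by
      rw [← pow_mul]; congr 1; omega
    have h2 : (2:ℤ)^n = 2 * 2^(n-1) := by
      conv_lhs => rw [show n = n-1+1 from by omega, pow_succ]
      ring
    rw [h1, h2, hmdef]; push_cast; ring
  rw [hc1, hc2, hc3]
end

section
/- For every integer n ≥ 3, the spectral radius λ_1(Γ_n) (the largest eigenvalue of the adjacency matrix of Γ_n) satisfies 2^{n-1} − 1 < λ_1(Γ_n) ≤ 2^{n-1} − 1 + √(2^{n-1}), where 2^{n-1} − 1 is the spectral radius of the complete graph K_{2^{n-1}} (the power graph of the cyclic group Z_{2^{n-1}}). -/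
/-! ### Auxiliary lemmas -/

open Finset Matrix

/-- Extract an eigenvector from spectrum membership. -/
lemma spec_eigenvector {N : Type*} [Fintype N] [DecidableEq N] {A : Matrix N N ℝ} {μ : ℝ}
    (h : μ ∈ spectrum ℝ A) : ∃ v : N → ℝ, v ≠ 0 ∧ A *ᵥ v = μ • v := by
  rw [spectrum.mem_iff, Matrix.isUnit_iff_isUnit_det, isUnit_iff_ne_zero, not_not] at h
  obtain ⟨v, hv0, hv⟩ := Matrix.exists_mulVec_eq_zero_iff.2 h
  refine ⟨v, hv0, ?_⟩
  rw [Matrix.sub_mulVec, Algebra.algebraMap_eq_smul_one, Matrix.smul_mulVec,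
    Matrix.one_mulVec, sub_eq_zero] at hv
  exact hv.symm

/-- An eigenvalue belongs to the spectrum. -/
lemma mem_spec_of_eigenvector {N : Type*} [Fintype N] [DecidableEq N] {A : Matrix N N ℝ} {μ : ℝ}
    {v : N → ℝ} (hv : v ≠ 0) (hev : A *ᵥ v = μ • v) : μ ∈ spectrum ℝ A := by
  rw [spectrum.mem_iff, Matrix.isUnit_iff_isUnit_det, isUnit_iff_ne_zero, not_not]
  refine Matrix.exists_mulVec_eq_zero_iff.1 ⟨v, hv, ?_⟩
  rw [Matrix.sub_mulVec, Algebra.algebraMap_eq_smul_one, Matrix.smul_mulVec,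
    Matrix.one_mulVec, hev, sub_self]

/-- Perron-type upper bound: if `A` is symmetric with nonnegative entries, `t` is a positive
vector with `A *ᵥ t ≤ lam • t` componentwise, then every eigenvalue of `A` is at most `lam`. -/
lemma perron_bound {N : Type*} [Fintype N] {A : Matrix N N ℝ}
    (hnn : ∀ j k, 0 ≤ A j k) (hsym : Aᵀ = A)
    {μ : ℝ} {v : N → ℝ} (hv : v ≠ 0) (hev : A *ᵥ v = μ • v)
    (t : N → ℝ) (ht : ∀ j, 0 < t j) (lam : ℝ)
    (hAt : ∀ j, (A *ᵥ t) j ≤ lam * t j) : μ ≤ lam := by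
  classical
  set w : N → ℝ := fun j => |v j| with hwdef
  have hw : ∀ j, |μ| * w j ≤ (A *ᵥ w) j := by
    intro j
    have h1 : |μ| * w j = |(A *ᵥ v) j| := by
      rw [hev]; simp [hwdef, abs_mul]
    rw [h1]
    have h2 : (A *ᵥ v) j = ∑ k, A j k * v k := rfl
    have h3 : (A *ᵥ w) j = ∑ k, A j k * w k := rfl
    rw [h2, h3]
    refine le_trans (Finset.abs_sum_le_sum_abs _ _) (Finset.sum_le_sum fun k _ => ?_)
    rw [abs_mul, abs_of_nonneg (hnn j k)]
  obtain ⟨j0, hj0⟩ : ∃ j, v j ≠ 0 := by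
    by_contra h; push_neg at h; exact hv (funext fun j => h j)
  have htw : 0 < ∑ j, t j * w j := by
    refine lt_of_lt_of_le (mul_pos (ht j0) (abs_pos.mpr hj0))
      (Finset.single_le_sum (fun k _ => mul_nonneg (ht k).le (abs_nonneg _))
        (Finset.mem_univ j0))
  have key : |μ| * ∑ j, t j * w j ≤ lam * ∑ j, t j * w j := by
    have e1 : |μ| * ∑ j, t j * w j = ∑ j, t j * (|μ| * w j) := by
      rw [Finset.mul_sum]; exact Finset.sum_congr rfl fun j _ => by ring
    have s1 : ∑ j, t j * (|μ| * w j) ≤ ∑ j, t j * (A *ᵥ w) j :=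
      Finset.sum_le_sum fun j _ => mul_le_mul_of_nonneg_left (hw j) (ht j).le
    have s2 : ∑ j, t j * (A *ᵥ w) j = ∑ j, (A *ᵥ t) j * w j := by
      have hd : t ⬝ᵥ (A *ᵥ w) = (A *ᵥ t) ⬝ᵥ w := by
        rw [Matrix.dotProduct_mulVec]
        congr 1
        conv_lhs => rw [← hsym]
        rw [Matrix.vecMul_transpose]
      simpa [dotProduct] using hd
    have s3 : ∑ j, (A *ᵥ t) j * w j ≤ ∑ j, lam * t j * w j :=
      Finset.sum_le_sum fun j _ => mul_le_mul_of_nonneg_right (hAt j) (abs_nonneg _)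
    have e2 : ∑ j, lam * t j * w j = lam * ∑ j, t j * w j := by
      rw [Finset.mul_sum]; exact Finset.sum_congr rfl fun j _ => by ring
    calc |μ| * ∑ j, t j * w j = ∑ j, t j * (|μ| * w j) := e1
      _ ≤ ∑ j, t j * (A *ᵥ w) j := s1
      _ = ∑ j, (A *ᵥ t) j * w j := s2
      _ ≤ ∑ j, lam * t j * w j := s3
      _ = lam * ∑ j, t j * w j := e2
  exact le_trans (le_abs_self μ) (le_of_mul_le_mul_right key htw)

/-- For real vectors, `star U *ᵥ x = x ᵥ* U`. -/
lemma star_mulVec_eq_vecMul {N : Type*} [Fintype N] (U : Matrix N N ℝ) (x : N → ℝ) :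
    (star U) *ᵥ x = x ᵥ* U := by
  funext i
  simp [Matrix.mulVec, Matrix.vecMul, dotProduct, Matrix.conjTranspose_apply,
    mul_comm]

/-- Rayleigh-type lower bound: if the quadratic form exceeds `c` times the norm squared,
then some eigenvalue exceeds `c`. -/
lemma exists_eig_gt {N : Type*} [Fintype N] [DecidableEq N] {A : Matrix N N ℝ}
    (hA : A.IsHermitian) (x : N → ℝ) {c : ℝ}
    (h : c * (x ⬝ᵥ x) < x ⬝ᵥ (A *ᵥ x)) : ∃ i, c < hA.eigenvalues i := by
  by_contra hcon
  push_neg at hcon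
  set U : Matrix N N ℝ := (hA.eigenvectorUnitary : Matrix N N ℝ) with hUdef
  set y : N → ℝ := x ᵥ* U with hydef
  have hsU : (star U) *ᵥ x = y := star_mulVec_eq_vecMul U x
  have hD : Matrix.diagonal (RCLike.ofReal ∘ hA.eigenvalues) = Matrix.diagonal hA.eigenvalues := by
    rw [RCLike.ofReal_real_eq_id, Function.id_comp]
  have hAxy : x ⬝ᵥ (A *ᵥ x) = ∑ i, hA.eigenvalues i * (y i) ^ 2 := by
    conv_lhs => rw [hA.spectral_theorem, hD]
    rw [Unitary.conjStarAlgAut_apply, ← Matrix.mulVec_mulVec, ← Matrix.mulVec_mulVec, hsU, Matrix.dotProduct_mulVec]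
    rw [← hydef]
    simp only [dotProduct, Matrix.mulVec_diagonal]
    exact Finset.sum_congr rfl fun i _ => by ring
  have hUU : U * star U = 1 := Matrix.mem_unitaryGroup_iff.mp hA.eigenvectorUnitary.2
  have hxx : x ⬝ᵥ x = ∑ i, (y i) ^ 2 := by
    have h6 : U *ᵥ y = x := by
      rw [← hsU, Matrix.mulVec_mulVec, hUU, Matrix.one_mulVec]
    have h5 : x ⬝ᵥ (U *ᵥ y) = y ⬝ᵥ y := by
      rw [Matrix.dotProduct_mulVec, ← hydef]
    rw [h6] at h5
    rw [h5]
    simp [dotProduct, sq]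
  rw [hAxy, hxx] at h
  have : ∑ i, hA.eigenvalues i * (y i) ^ 2 ≤ c * ∑ i, (y i) ^ 2 := by
    rw [Finset.mul_sum]
    exact Finset.sum_le_sum fun i _ => mul_le_mul_of_nonneg_right (hcon i) (sq_nonneg _)
  linarith

/-- The step-pattern function. -/
noncomputable def pat (m : ℕ) (a b c : ℝ) (i : ℕ) : ℝ :=
  if i = 0 then a else if i < m then b else c

lemma sum_pat (N m : ℕ) (hm : 1 ≤ m) (hN : N = 2 * m) (a b c : ℝ) :
    ∑ j : Fin N, pat m a b c j.val = a + ((m : ℝ) - 1) * b + (m : ℝ) * c := by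
  rw [Fin.sum_univ_eq_sum_range (fun i => pat m a b c i) N]
  have h1 : (1 : ℕ) ≤ m := hm
  have hmN : m ≤ N := by omega
  rw [Finset.range_eq_Ico, ← Finset.sum_Ico_consecutive _ (Nat.zero_le m) hmN,
    ← Finset.sum_Ico_consecutive _ (Nat.zero_le 1) h1]
  have e0 : ∑ i ∈ Finset.Ico 0 1, pat m a b c i = a := by
    rw [← Finset.range_eq_Ico, Finset.sum_range_one]
    simp [pat]
  have e1 : ∑ i ∈ Finset.Ico 1 m, pat m a b c i = ((m : ℝ) - 1) * b := by
    have hc : ∀ i ∈ Finset.Ico 1 m, pat m a b c i = b := by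
      intro i hi
      rw [Finset.mem_Ico] at hi
      simp only [pat]
      rw [if_neg (by omega), if_pos hi.2]
    rw [Finset.sum_congr rfl hc, Finset.sum_const, Nat.card_Ico,
      nsmul_eq_mul, Nat.cast_sub h1, Nat.cast_one]
  have e2 : ∑ i ∈ Finset.Ico m N, pat m a b c i = (m : ℝ) * c := by
    have hc : ∀ i ∈ Finset.Ico m N, pat m a b c i = c := by
      intro i hi
      rw [Finset.mem_Ico] at hi
      simp only [pat]
      rw [if_neg (by omega), if_neg (by omega)]
    have hcard : N - m = m := by omega
    rw [Finset.sum_congr rfl hc, Finset.sum_const, Nat.card_Ico, hcard, nsmul_eq_mul]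
  rw [e0, e1, e2]

lemma gamma_mulVec (n : ℕ) (hn : 3 ≤ n) (a b c : ℝ) (j : Fin (2 ^ n)) :
    ((Gamma n).adjMatrix ℝ *ᵥ fun k => pat (2 ^ (n - 1)) a b c k.val) j
      = pat (2 ^ (n - 1)) ((((2 ^ (n - 1) : ℕ) : ℝ) - 1) * b + ((2 ^ (n - 1) : ℕ) : ℝ) * c)
          (a + (((2 ^ (n - 1) : ℕ) : ℝ) - 2) * b) a j.val := by
  classical
  set m : ℕ := 2 ^ (n - 1) with hmdef
  have hm4 : 4 ≤ m := by
    have : 2 ^ 2 ≤ 2 ^ (n - 1) := Nat.pow_le_pow_right (by norm_num) (by omega)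
    simpa using this
  have hN : 2 ^ n = 2 * m := by
    rw [hmdef, ← pow_succ']
    congr 1
    omega
  have hjN : j.val < 2 * m := by rw [← hN]; exact j.isLt
  have hmv : ((Gamma n).adjMatrix ℝ *ᵥ fun k => pat m a b c k.val) j
      = ∑ k, (Gamma n).adjMatrix ℝ j k * pat m a b c k.val := rfl
  rw [hmv]
  rcases Nat.eq_zero_or_pos j.val with hj0 | hjpos
  · -- j = 0
    have hterm : ∀ k : Fin (2 ^ n), (Gamma n).adjMatrix ℝ j k * pat m a b c k.val
        = pat m 0 b c k.val := by
      intro k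
      rw [SimpleGraph.adjMatrix_apply]
      by_cases hk : k.val = 0
      · have hjk : j = k := Fin.ext (by omega)
        rw [if_neg (by simp [hjk]), zero_mul]
        simp [pat, hk]
      · have hadj : (Gamma n).Adj j k := by
          rw [Gamma, SimpleGraph.fromRel_adj]
          exact ⟨fun h => hk (h ▸ hj0), Or.inl (Or.inr (Or.inl hj0))⟩
        rw [if_pos hadj, one_mul]
        simp [pat, hk]
    rw [Finset.sum_congr rfl fun k _ => hterm k, sum_pat (2 ^ n) m (by omega) hN]
    simp [pat, hj0]
  · rcases lt_or_ge j.val m with hjm | hjm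
    · -- j in clique, j ≠ 0
      have hterm : ∀ k : Fin (2 ^ n), (Gamma n).adjMatrix ℝ j k * pat m a b c k.val
          = pat m a b 0 k.val - (if k = j then pat m a b 0 k.val else 0) := by
        intro k
        rw [SimpleGraph.adjMatrix_apply]
        by_cases hkj : k = j
        · rw [if_pos hkj, hkj]
          rw [if_neg (by simp [SimpleGraph.irrefl]), zero_mul]
          ring
        · rw [if_neg hkj]
          by_cases hkm : k.val < m
          · have hadj : (Gamma n).Adj j k := by
              rw [Gamma, SimpleGraph.fromRel_adj]
              exact ⟨fun h => hkj (h.symm), Or.inl (Or.inl ⟨hjm, hkm⟩)⟩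
            rw [if_pos hadj, one_mul]
            simp only [pat]
            by_cases hk0 : k.val = 0
            · rw [if_pos hk0, if_pos hk0]; ring
            · rw [if_neg hk0, if_neg hk0, if_pos hkm, if_pos hkm]; ring
          · have hnadj : ¬ (Gamma n).Adj j k := by
              rw [Gamma, SimpleGraph.fromRel_adj]
              rintro ⟨-, h | h⟩
              · rcases h with ⟨h1, h2⟩ | h | h <;> omega
              · rcases h with ⟨h1, h2⟩ | h | h <;> omega
            rw [if_neg hnadj, zero_mul]
            simp only [pat]
            rw [if_neg (by omega), if_neg hkm]
            ring
      rw [Finset.sum_congr rfl fun k _ => hterm k, Finset.sum_sub_distrib,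
        sum_pat (2 ^ n) m (by omega) hN, Finset.sum_ite_eq' Finset.univ j
          (fun k => pat m a b 0 k.val), if_pos (Finset.mem_univ j)]
      simp only [pat]
      rw [if_neg (by omega), if_pos hjm, if_neg (by omega), if_pos hjm]
      ring
    · -- j in H
      have hterm : ∀ k : Fin (2 ^ n), (Gamma n).adjMatrix ℝ j k * pat m a b c k.val
          = pat m a 0 0 k.val := by
        intro k
        rw [SimpleGraph.adjMatrix_apply]
        by_cases hk0 : k.val = 0
        · have hadj : (Gamma n).Adj j k := by
            rw [Gamma, SimpleGraph.fromRel_adj]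
            exact ⟨fun h => by omega, Or.inl (Or.inr (Or.inr hk0))⟩
          rw [if_pos hadj, one_mul]
          simp [pat, hk0]
        · have hnadj : ¬ (Gamma n).Adj j k := by
            rw [Gamma, SimpleGraph.fromRel_adj]
            rintro ⟨-, h | h⟩
            · rcases h with ⟨h1, h2⟩ | h | h <;> omega
            · rcases h with ⟨h1, h2⟩ | h | h <;> omega
          rw [if_neg hnadj, zero_mul]
          simp only [pat]
          rw [if_neg hk0]
          split_ifs <;> rfl
      rw [Finset.sum_congr rfl fun k _ => hterm k, sum_pat (2 ^ n) m (by omega) hN]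
      simp only [pat]
      rw [if_neg (by omega), if_neg (by omega)]
      ring

/-- For every n ≥ 3, the spectral radius λ₁(Γ_n), i.e. the largest eigenvalue of the
(real symmetric) adjacency matrix of Γ_n, satisfies
2^(n-1) − 1 < λ₁(Γ_n) ≤ 2^(n-1) − 1 + √(2^(n-1)); here 2^(n-1) − 1 is the spectral
radius of the complete graph K_{2^(n-1)} (the power graph of Z_{2^(n-1)}). -/
theorem stmt_14 (n : ℕ) (hn : 3 ≤ n) :
    (∃ lam : ℝ, IsGreatest (spectrum ℝ ((Gamma n).adjMatrix ℝ)) lam ∧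
      2 ^ (n - 1) - 1 < lam ∧ lam ≤ 2 ^ (n - 1) - 1 + Real.sqrt (2 ^ (n - 1))) ∧
    IsGreatest (spectrum ℝ ((⊤ : SimpleGraph (Fin (2 ^ (n - 1)))).adjMatrix ℝ))
      (2 ^ (n - 1) - 1) := by
  classical
  set m : ℕ := 2 ^ (n - 1) with hmdef
  have hm4 : 4 ≤ m := by
    have : 2 ^ 2 ≤ 2 ^ (n - 1) := Nat.pow_le_pow_right (by norm_num) (by omega)
    simpa using this
  have hN : 2 ^ n = 2 * m := by
    rw [hmdef, ← pow_succ']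
    congr 1
    omega
  set M : ℝ := (m : ℝ) with hMdef
  have hM4 : (4 : ℝ) ≤ M := by rw [hMdef]; exact_mod_cast hm4
  have hMcast : (2 : ℝ) ^ (n - 1) = M := by
    rw [hMdef, hmdef]
    push_cast
    ring
  constructor
  · -- the Gamma part
    set A : Matrix (Fin (2 ^ n)) (Fin (2 ^ n)) ℝ := (Gamma n).adjMatrix ℝ with hAdef
    have hsym : Aᵀ = A := SimpleGraph.transpose_adjMatrix _
    have hA : A.IsHermitian := by
      rw [Matrix.IsHermitian]
      have : Aᴴ = Aᵀ := by
        funext i k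
        simp [Matrix.conjTranspose_apply, Matrix.transpose_apply]
      rw [this, hsym]
    have hnn : ∀ j k, 0 ≤ A j k := fun j k => by
      rw [hAdef, SimpleGraph.adjMatrix_apply]
      split_ifs <;> norm_num
    haveI : Nonempty (Fin (2 ^ n)) := ⟨⟨0, by positivity⟩⟩
    obtain ⟨i0, hi0⟩ := Finite.exists_max hA.eigenvalues
    set lam : ℝ := hA.eigenvalues i0 with hlamdef
    have hgreat : IsGreatest (spectrum ℝ A) lam := by
      constructor
      · exact hA.eigenvalues_mem_spectrum_real i0
      · intro μ hμ
        rw [Matrix.IsHermitian.spectrum_real_eq_range_eigenvalues hA] at hμ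
        obtain ⟨i, rfl⟩ := hμ
        exact hi0 i
    have hlower : M - 1 < lam := by
      -- test vector for Rayleigh bound
      set t : ℝ := (M - 1)⁻¹ with htdef
      have hM1 : (0 : ℝ) < M - 1 := by linarith
      have ht0 : 0 < t := inv_pos.mpr hM1
      set x : Fin (2 ^ n) → ℝ := fun k => pat m 1 1 t k.val with hxdef
      have hAx : ∀ j, (A *ᵥ x) j
          = pat m ((M - 1) * 1 + M * t) (1 + (M - 2) * 1) 1 j.val := by
        intro j
        have := gamma_mulVec n hn 1 1 t j
        rw [← hmdef, ← hMdef] at this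
        exact this
      have hxAx : x ⬝ᵥ (A *ᵥ x)
          = 1 * ((M - 1) * 1 + M * t) + (M - 1) * (1 * (1 + (M - 2) * 1)) + M * (t * 1) := by
        have e : ∀ j, x j * (A *ᵥ x) j
            = pat m (1 * ((M - 1) * 1 + M * t)) (1 * (1 + (M - 2) * 1)) (t * 1) j.val := by
          intro j
          rw [hAx j, hxdef]
          simp only [pat]
          split_ifs <;> ring
        have : x ⬝ᵥ (A *ᵥ x) = ∑ j, x j * (A *ᵥ x) j := rfl
        rw [this, Finset.sum_congr rfl fun j _ => e j,
          sum_pat (2 ^ n) m (by omega) hN, ← hMdef]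
      have hxx : x ⬝ᵥ x = 1 * 1 + (M - 1) * (1 * 1) + M * (t * t) := by
        have e : ∀ j, x j * x j = pat m (1 * 1) (1 * 1) (t * t) j.val := by
          intro j
          rw [hxdef]
          simp only [pat]
          split_ifs <;> ring
        have : x ⬝ᵥ x = ∑ j, x j * x j := rfl
        rw [this, Finset.sum_congr rfl fun j _ => e j,
          sum_pat (2 ^ n) m (by omega) hN, ← hMdef]
      have hray : (M - 1) * (x ⬝ᵥ x) < x ⬝ᵥ (A *ᵥ x) := by
        rw [hxAx, hxx]
        have htM : t * (M - 1) = 1 := inv_mul_cancel₀ (ne_of_gt hM1)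
        nlinarith [mul_pos ht0 ht0, ht0, hM1]
      obtain ⟨i, hi⟩ := exists_eig_gt hA x hray
      exact lt_of_lt_of_le hi (hi0 i)
    have hupper : lam ≤ M - 1 + Real.sqrt M := by
      set s : ℝ := Real.sqrt M with hsdef
      have hs2 : s ^ 2 = M := Real.sq_sqrt (by linarith)
      have hs_ge : 2 ≤ s := by
        rw [hsdef]
        rw [show (2 : ℝ) = Real.sqrt 4 by
          rw [show (4 : ℝ) = 2 ^ 2 by norm_num, Real.sqrt_sq (by norm_num)]]
        exact Real.sqrt_le_sqrt hM4
      set L : ℝ := M - 1 + s with hLdef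
      have hL1 : (1 : ℝ) ≤ L := by linarith
      have hL0 : (0 : ℝ) < L := by linarith
      -- Perron test vector
      set ta : ℝ := 1 + s with htadef
      set tc : ℝ := (1 + s) / L with htcdef
      have hta0 : 0 < ta := by linarith
      have htc0 : 0 < tc := div_pos (by linarith) hL0
      set t : Fin (2 ^ n) → ℝ := fun k => pat m ta 1 tc k.val with htdef
      have ht0 : ∀ j, 0 < t j := by
        intro j
        rw [htdef]
        simp only [pat]
        split_ifs
        · exact hta0
        · exact one_pos
        · exact htc0
      have hAt : ∀ j, (A *ᵥ t) j ≤ L * t j := by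
        intro j
        have hform := gamma_mulVec n hn ta 1 tc j
        rw [← hmdef, ← hMdef] at hform
        rw [htdef]
        rw [hform]
        simp only [pat]
        have hLtc : L * tc = 1 + s := by
          rw [htcdef]
          field_simp
        split_ifs
        · -- vertex 0 : (M-1)*1 + M*tc ≤ L*ta
          have htc_le : tc ≤ 1 + s := by
            rw [htcdef]
            rw [div_le_iff₀ hL0]
            nlinarith
          nlinarith
        · -- clique : ta + (M-2)*1 ≤ L
          rw [htadef, hLdef]
          nlinarith
        · -- pendant : ta ≤ L * tc
          rw [hLtc, htadef]
      obtain ⟨v, hv0, hev⟩ := spec_eigenvector hgreat.1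
      exact perron_bound hnn hsym hv0 hev t ht0 L hAt
    exact ⟨lam, hgreat, by rw [hMcast]; exact hlower, by rw [hMcast]; exact hupper⟩
  · -- the complete graph part
    set B : Matrix (Fin m) (Fin m) ℝ := (⊤ : SimpleGraph (Fin m)).adjMatrix ℝ with hBdef
    have hBsym : Bᵀ = B := SimpleGraph.transpose_adjMatrix _
    have hBnn : ∀ j k, 0 ≤ B j k := fun j k => by
      rw [hBdef, SimpleGraph.adjMatrix_apply]
      split_ifs <;> norm_num
    haveI : Nonempty (Fin m) := ⟨⟨0, by omega⟩⟩
    have hBone : B *ᵥ (fun _ => (1 : ℝ)) = (M - 1) • (fun _ => (1 : ℝ)) := by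
      funext j
      show (∑ k, B j k * 1) = _
      have e : ∀ k : Fin m, B j k * 1 = 1 - (if j = k then 1 else 0) := by
        intro k
        by_cases h : j = k
        · subst h; simp [hBdef]
        · simp [hBdef, SimpleGraph.top_adj, h, Ne.symm]
      rw [Finset.sum_congr rfl fun k _ => e k, Finset.sum_sub_distrib,
        Finset.sum_const, Finset.sum_ite_eq Finset.univ j (fun _ => (1 : ℝ)),
        if_pos (Finset.mem_univ j)]
      simp [hMdef]
    have hone_ne : (fun _ => (1 : ℝ)) ≠ (0 : Fin m → ℝ) := by
      intro h
      have := congrFun h (Classical.arbitrary (Fin m))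
      norm_num at this
    constructor
    · rw [hMcast]
      exact mem_spec_of_eigenvector hone_ne hBone
    · intro μ hμ
      obtain ⟨v, hv0, hev⟩ := spec_eigenvector hμ
      rw [hMcast]
      refine perron_bound hBnn hBsym hv0 hev (fun _ => 1) (fun _ => one_pos) (M - 1) ?_
      intro j
      rw [hBone]
      simp
end

section
/- For every integer n ≥ 3, the detour distances in Γ_n are as follows, for distinct vertices u, v: d_D(u,v) = 2^{n-1} − 1 if both u, v ∈ P(n) = {0,…,2^{n-1}−1}; d_D(0,w) = 1 if w ∈ H(n) = {2^{n-1},…,2^n−1}; d_D(u,w) = 2^{n-1} if u ∈ P(n) \ {0} and w ∈ H(n); and d_D(w,w') = 2 if both w, w' ∈ H(n). -/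
/-- The detour distance between two vertices: the maximum length of a path
(a walk with no repeated vertices) between them. -/
noncomputable def detourDist {V : Type*} (G : SimpleGraph V) (u v : V) : ℕ :=
  sSup {k : ℕ | ∃ p : G.Walk u v, p.IsPath ∧ p.length = k}

namespace DetourAux

open SimpleGraph Walk

variable {n : ℕ}

lemma gamma_adj_iff (u v : Fin (2 ^ n)) :
    (Gamma n).Adj u v ↔ u ≠ v ∧
      ((u.val < 2 ^ (n - 1) ∧ v.val < 2 ^ (n - 1)) ∨ u.val = 0 ∨ v.val = 0) := by
  simp only [Gamma, SimpleGraph.fromRel_adj]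
  tauto

lemma mpow (hn : 1 ≤ n) : 2 ^ (n - 1) < 2 ^ n :=
  Nat.pow_lt_pow_right (by norm_num) (by omega)

/-- the zero vertex -/
def z (n : ℕ) : Fin (2 ^ n) := ⟨0, Nat.two_pow_pos n⟩

lemma eq_z_of_val (x : Fin (2 ^ n)) (h : x.val = 0) : x = z n := Fin.ext h

lemma adj_H (w x : Fin (2 ^ n)) (hw : 2 ^ (n - 1) ≤ w.val)
    (h : (Gamma n).Adj w x) : x = z n := by
  rw [gamma_adj_iff] at h
  obtain ⟨hne, h⟩ := h
  have hm : 0 < 2 ^ (n - 1) := Nat.two_pow_pos _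
  apply eq_z_of_val
  omega

lemma adj_of (u v : Fin (2 ^ n)) (hne : u ≠ v)
    (h : (u.val < 2 ^ (n - 1) ∧ v.val < 2 ^ (n - 1)) ∨ u.val = 0 ∨ v.val = 0) :
    (Gamma n).Adj u v := (gamma_adj_iff u v).2 ⟨hne, h⟩

/-- a path from a vertex to itself is nil -/
lemma loop_nil {a : Fin (2 ^ n)} (p : (Gamma n).Walk a a) (hp : p.IsPath) : p.length = 0 := by
  cases p with
  | nil => rfl
  | cons h q =>
    rw [SimpleGraph.Walk.cons_isPath_iff] at hp
    exact absurd q.end_mem_support hp.2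

/-- any path from a vertex of H to 0 has length 1 -/
lemma len_H' {b a : Fin (2 ^ n)} (p : (Gamma n).Walk b a) (hp : p.IsPath)
    (hb : 2 ^ (n - 1) ≤ b.val) (ha : a.val = 0) : p.length = 1 := by
  have hm : 0 < 2 ^ (n - 1) := Nat.two_pow_pos _
  cases p with
  | nil => omega
  | @cons _ c _ h q =>
    have hc : c = a := by
      have := adj_H _ _ hb h
      apply Fin.ext
      rw [this]
      exact ha.symm
    subst hc
    rw [SimpleGraph.Walk.cons_isPath_iff] at hp
    rw [SimpleGraph.Walk.length_cons, loop_nil q hp.1]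

/-- any path from 0 to a vertex of H has length 1 -/
lemma len_H {a b : Fin (2 ^ n)} (p : (Gamma n).Walk a b) (hp : p.IsPath)
    (ha : a.val = 0) (hb : 2 ^ (n - 1) ≤ b.val) : p.length = 1 := by
  rw [← SimpleGraph.Walk.length_reverse]
  exact len_H' p.reverse hp.reverse hb ha

/-- second vertex of a path starting in H is 0 -/
lemma second_z {b a : Fin (2 ^ n)} (p : (Gamma n).Walk b a) (hp : p.IsPath)
    (hb : 2 ^ (n - 1) ≤ b.val) (hab : b ≠ a) : z n ∈ p.support.tail := by
  cases p with
  | nil => exact absurd rfl hab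
  | @cons _ c _ h q =>
    have hc : c = z n := adj_H _ _ hb h
    subst hc
    rw [SimpleGraph.Walk.support_cons]
    exact q.start_mem_support

/-- paths with both endpoints in P stay in P -/
lemma supp_P {a b : Fin (2 ^ n)} (p : (Gamma n).Walk a b) (hp : p.IsPath)
    (ha : a.val < 2 ^ (n - 1)) (hb : b.val < 2 ^ (n - 1)) :
    ∀ x ∈ p.support, x.val < 2 ^ (n - 1) := by
  intro x hx
  by_contra hxm
  push_neg at hxm
  have hxa : x ≠ a := fun h => by subst h; omega
  have hxb : x ≠ b := fun h => by subst h; omega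
  classical
  set q := p.takeUntil x hx with hq
  set r := p.dropUntil x hx with hr
  have hqr : q.append r = p := p.take_spec hx
  have hqp : q.IsPath := hp.takeUntil hx
  have hrp : r.IsPath := hp.dropUntil hx
  have h1 : z n ∈ q.support := by
    have := second_z q.reverse hqp.reverse hxm hxa
    have h2 := List.mem_of_mem_tail this
    rwa [SimpleGraph.Walk.support_reverse, List.mem_reverse] at h2
  have h2 : z n ∈ r.support.tail := second_z r hrp hxm hxb
  have hnd : (q.support ++ r.support.tail).Nodup := by
    rw [← SimpleGraph.Walk.support_append, hqr]
    exact hp.support_nodup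
  exact List.disjoint_of_nodup_append hnd h1 h2

/-- length bound for paths inside P -/
lemma len_P {a b : Fin (2 ^ n)} (p : (Gamma n).Walk a b) (hp : p.IsPath)
    (ha : a.val < 2 ^ (n - 1)) (hb : b.val < 2 ^ (n - 1)) :
    p.length + 1 ≤ 2 ^ (n - 1) := by
  classical
  have hsub : ∀ x ∈ p.support, x.val < 2 ^ (n - 1) := supp_P p hp ha hb
  have hnd : (p.support.map Fin.val).Nodup :=
    hp.support_nodup.map (fun _ _ => Fin.ext)
  have hsubset : (p.support.map Fin.val).toFinset ⊆ Finset.range (2 ^ (n - 1)) := by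
    intro x hx
    rw [List.mem_toFinset, List.mem_map] at hx
    obtain ⟨y, hy, rfl⟩ := hx
    exact Finset.mem_range.2 (hsub y hy)
  have := Finset.card_le_card hsubset
  rw [List.toFinset_card_of_nodup hnd, Finset.card_range, List.length_map,
    SimpleGraph.Walk.length_support] at this
  exact this

/-- Hamiltonian-type path construction inside P -/
lemma ham : ∀ (l : List (Fin (2 ^ n))) (u v : Fin (2 ^ n)), l.Nodup →
    (∀ x ∈ l, x.val < 2 ^ (n - 1)) → u.val < 2 ^ (n - 1) → v.val < 2 ^ (n - 1) →
    u ≠ v → u ∉ l → v ∉ l →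
    ∃ p : (Gamma n).Walk u v, p.IsPath ∧ p.length = l.length + 1 ∧
      p.support = u :: (l ++ [v])
  | [], u, v, _, _, hu, hv, huv, _, _ => by
    refine ⟨SimpleGraph.Walk.cons (adj_of u v huv (Or.inl ⟨hu, hv⟩)) SimpleGraph.Walk.nil,
      ?_, rfl, rfl⟩
    rw [SimpleGraph.Walk.cons_isPath_iff]
    refine ⟨SimpleGraph.Walk.IsPath.nil, ?_⟩
    simp [huv]
  | a :: l', u, v, hnd, hlt, hu, hv, huv, hul, hvl => by
    have hua : u ≠ a := fun h => hul (h ▸ (List.mem_cons_self : a ∈ a :: l'))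
    have hva : v ≠ a := fun h => hvl (h ▸ (List.mem_cons_self : a ∈ a :: l'))
    obtain ⟨p', hp', hlen', hsupp'⟩ := ham l' a v (List.nodup_cons.1 hnd).2
      (fun x hx => hlt x (List.mem_cons_of_mem a hx))
      (hlt a ((List.mem_cons_self : a ∈ a :: l'))) hv (Ne.symm hva)
      (List.nodup_cons.1 hnd).1 (fun h => hvl (List.mem_cons_of_mem a h))
    refine ⟨SimpleGraph.Walk.cons (adj_of u a hua (Or.inl ⟨hu, hlt a ((List.mem_cons_self : a ∈ a :: l'))⟩)) p',
      ?_, ?_, ?_⟩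
    · rw [SimpleGraph.Walk.cons_isPath_iff]
      refine ⟨hp', ?_⟩
      rw [hsupp']
      simp only [List.mem_cons, List.mem_append, List.mem_singleton]
      push_neg
      exact ⟨hua, fun h => hul (List.mem_cons_of_mem a h), by simp [huv]⟩
    · rw [SimpleGraph.Walk.length_cons, hlen']; simp
    · rw [SimpleGraph.Walk.support_cons, hsupp']; simp

lemma card_P (hn : 1 ≤ n) :
    (Finset.univ.filter (fun x : Fin (2 ^ n) => x.val < 2 ^ (n - 1))).card = 2 ^ (n - 1) := by
  classical
  have : (Finset.univ.filter (fun x : Fin (2 ^ n) => x.val < 2 ^ (n - 1)))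
      = Finset.Iio (⟨2 ^ (n - 1), mpow hn⟩ : Fin (2 ^ n)) := by
    ext x
    simp [Fin.lt_def]
  rw [this, Fin.card_Iio]

lemma exists_ham (hn : 3 ≤ n) (u v : Fin (2 ^ n)) (hu : u.val < 2 ^ (n - 1))
    (hv : v.val < 2 ^ (n - 1)) (huv : u ≠ v) :
    ∃ p : (Gamma n).Walk u v, p.IsPath ∧ p.length = 2 ^ (n - 1) - 1 := by
  classical
  have hm4 : 4 ≤ 2 ^ (n - 1) := by
    calc (4 : ℕ) = 2 ^ 2 := by norm_num
    _ ≤ 2 ^ (n - 1) := Nat.pow_le_pow_right (by norm_num) (by omega)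
  set S := Finset.univ.filter (fun x : Fin (2 ^ n) => x.val < 2 ^ (n - 1)) with hS
  set T := S \ {u, v} with hT
  have hsub : ({u, v} : Finset (Fin (2 ^ n))) ⊆ S := by
    intro x hx
    simp only [Finset.mem_insert, Finset.mem_singleton] at hx
    rcases hx with rfl | rfl <;> simp [hS, hu, hv]
  have hcardT : T.card = 2 ^ (n - 1) - 2 := by
    rw [hT, Finset.card_sdiff_of_subset hsub, card_P (by omega), Finset.card_pair huv]
  have hmemT : ∀ x, x ∈ T.toList ↔ (x.val < 2 ^ (n - 1) ∧ x ≠ u ∧ x ≠ v) := by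
    intro x
    rw [Finset.mem_toList, hT, Finset.mem_sdiff]
    simp [hS]
  obtain ⟨p, hp, hlen, -⟩ := ham T.toList u v T.nodup_toList
    (fun x hx => ((hmemT x).1 hx).1) hu hv huv
    (fun h => ((hmemT u).1 h).2.1 rfl) (fun h => ((hmemT v).1 h).2.2 rfl)
  refine ⟨p, hp, ?_⟩
  rw [hlen, Finset.length_toList, hcardT]
  omega

lemma len_ub3 {w u : Fin (2 ^ n)} (p : (Gamma n).Walk w u) (hp : p.IsPath)
    (hw : 2 ^ (n - 1) ≤ w.val) (hu : u.val < 2 ^ (n - 1)) :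
    p.length ≤ 2 ^ (n - 1) := by
  cases p with
  | nil => simp
  | @cons _ c _ h q =>
    have hc : c = z n := adj_H _ _ hw h
    subst hc
    rw [SimpleGraph.Walk.cons_isPath_iff] at hp
    have := len_P q hp.1 (show (z n).val < 2 ^ (n - 1) from Nat.two_pow_pos _) hu
    rw [SimpleGraph.Walk.length_cons]
    omega

lemma len_ub4 {w w' : Fin (2 ^ n)} (p : (Gamma n).Walk w w') (hp : p.IsPath)
    (hw : 2 ^ (n - 1) ≤ w.val) (hw' : 2 ^ (n - 1) ≤ w'.val) :
    p.length ≤ 2 := by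
  cases p with
  | nil => simp
  | @cons _ c _ h q =>
    have hc : c = z n := adj_H _ _ hw h
    subst hc
    rw [SimpleGraph.Walk.cons_isPath_iff] at hp
    have := len_H q hp.1 rfl hw'
    rw [SimpleGraph.Walk.length_cons]
    omega

end DetourAux

open DetourAux SimpleGraph Walk

/-- For every n ≥ 3 and distinct vertices u, v of Γ_n:
d_D(u,v) = 2^(n-1)−1 if u,v ∈ P(n); d_D(0,w) = 1 if w ∈ H(n);
d_D(u,w) = 2^(n-1) if u ∈ P(n)\{0} and w ∈ H(n); and
d_D(w,w') = 2 if w,w' ∈ H(n). -/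
theorem stmt_15 (n : ℕ) (hn : 3 ≤ n) :
    (∀ u v : Fin (2 ^ n), u ≠ v → u.val < 2 ^ (n - 1) → v.val < 2 ^ (n - 1) →
      detourDist (Gamma n) u v = 2 ^ (n - 1) - 1) ∧
    (∀ w : Fin (2 ^ n), 2 ^ (n - 1) ≤ w.val →
      detourDist (Gamma n) ⟨0, Nat.two_pow_pos n⟩ w = 1) ∧
    (∀ u w : Fin (2 ^ n), 1 ≤ u.val → u.val < 2 ^ (n - 1) → 2 ^ (n - 1) ≤ w.val →
      detourDist (Gamma n) u w = 2 ^ (n - 1)) ∧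
    (∀ w w' : Fin (2 ^ n), w ≠ w' → 2 ^ (n - 1) ≤ w.val → 2 ^ (n - 1) ≤ w'.val →
      detourDist (Gamma n) w w' = 2) := by
  have hmpos : 0 < 2 ^ (n - 1) := Nat.two_pow_pos _
  refine ⟨?_, ?_, ?_, ?_⟩
  · -- both in P
    intro u v huv hu hv
    apply IsGreatest.csSup_eq
    constructor
    · obtain ⟨p, hp, hlen⟩ := exists_ham hn u v hu hv huv
      exact ⟨p, hp, hlen⟩
    · rintro k ⟨p, hp, rfl⟩
      have := len_P p hp hu hv
      omega
  · -- 0 to H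
    intro w hw
    apply IsGreatest.csSup_eq
    have hzw : (⟨0, Nat.two_pow_pos n⟩ : Fin (2 ^ n)) ≠ w :=
      Fin.ne_of_val_ne (by simp; omega)
    constructor
    · refine ⟨SimpleGraph.Walk.cons (adj_of _ w hzw (Or.inr (Or.inl rfl))) SimpleGraph.Walk.nil, ?_, rfl⟩
      rw [SimpleGraph.Walk.cons_isPath_iff]
      exact ⟨SimpleGraph.Walk.IsPath.nil, by simpa using hzw⟩
    · rintro k ⟨p, hp, rfl⟩
      exact le_of_eq (len_H p hp rfl hw)
  · -- P \ {0} to H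
    intro u w hu1 hu hw
    apply IsGreatest.csSup_eq
    have huz : u ≠ z n := Fin.ne_of_val_ne (by show _ ≠ 0; omega)
    have hwz : w ≠ z n := Fin.ne_of_val_ne (by show _ ≠ 0; omega)
    constructor
    · obtain ⟨p0, hp0, hlen0⟩ := exists_ham hn u (z n) hu hmpos huz
      have hwadj : (Gamma n).Adj w (z n) := adj_of w (z n) hwz (Or.inr (Or.inr rfl))
      have hwsup : w ∉ p0.support := by
        intro h
        have := supp_P p0 hp0 hu hmpos w h
        omega
      refine ⟨(SimpleGraph.Walk.cons hwadj p0.reverse).reverse, ?_, ?_⟩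
      · apply SimpleGraph.Walk.IsPath.reverse
        rw [SimpleGraph.Walk.cons_isPath_iff]
        refine ⟨hp0.reverse, ?_⟩
        rwa [SimpleGraph.Walk.support_reverse, List.mem_reverse]
      · rw [SimpleGraph.Walk.length_reverse, SimpleGraph.Walk.length_cons,
          SimpleGraph.Walk.length_reverse, hlen0]
        omega
    · rintro k ⟨p, hp, rfl⟩
      have := len_ub3 p.reverse hp.reverse hw hu
      rwa [SimpleGraph.Walk.length_reverse] at this
  · -- both in H
    intro w w' hww hw hw'
    apply IsGreatest.csSup_eq
    have hwz : w ≠ z n := Fin.ne_of_val_ne (by show _ ≠ 0; omega)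
    have hzw' : z n ≠ w' := Fin.ne_of_val_ne (by show 0 ≠ _; omega)
    constructor
    · refine ⟨SimpleGraph.Walk.cons (adj_of w (z n) hwz (Or.inr (Or.inr rfl)))
        (SimpleGraph.Walk.cons (adj_of (z n) w' hzw' (Or.inr (Or.inl rfl)))
          SimpleGraph.Walk.nil), ?_, rfl⟩
      rw [SimpleGraph.Walk.cons_isPath_iff, SimpleGraph.Walk.cons_isPath_iff]
      refine ⟨⟨SimpleGraph.Walk.IsPath.nil, by simp [hzw']⟩, ?_⟩
      simp [hwz, hww]
    · rintro k ⟨p, hp, rfl⟩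
      exact len_ub4 p hp hw hw'
end
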